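/- arXiv:1708.09357 — 11 statements merged into one kernel-verified Lean document; each statement's English description precedes it below -/
import Mathlib

section
/- Let α ∈ ℝ, let I ⊆ ℝ be an open interval, and let u : I → ℝ be twice differentiable and satisfy u''(x) = 2u(x)³ + x·u(x) − α on I. If x₀ ∈ I satisfies f(x₀) = 0, where f(x) := 2u(x)² − 2u'(x) + x, then f'(x₀) = 2α + 1. -/
open Filter Topology Set

/-- The auxiliary function `f(x) = 2 u(x)^2 - 2 u'(x) + x` appearing in the
Bäcklund transformation for Painlevé II. -/
def piiF (u u' : ℝ → ℝ) : ℝ → ℝ := fun x => 2 * (u x) ^ 2 - 2 * u' x + x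

/-- if `u` solves the inhomogeneous Painlevé II equation
`u'' = 2 u^3 + x u - α` on an open interval `I` and `f(x₀) = 0` for some
`x₀ ∈ I`, where `f = 2 u^2 - 2 u' + x`, then `f'(x₀) = 2 α + 1`. -/
theorem piiF_deriv_at_zero (α : ℝ) (I : Set ℝ) (hIopen : IsOpen I)
    (hIconn : I.OrdConnected) (u u' u'' : ℝ → ℝ)
    (hu : ∀ x ∈ I, HasDerivAt u (u' x) x)
    (hu' : ∀ x ∈ I, HasDerivAt u' (u'' x) x)
    (hPII : ∀ x ∈ I, u'' x = 2 * (u x) ^ 3 + x * u x - α)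
    (x₀ : ℝ) (hx₀ : x₀ ∈ I) (hfx₀ : piiF u u' x₀ = 0) :
    HasDerivAt (piiF u u') (2 * α + 1) x₀ := by
  have h1 : HasDerivAt (piiF u u')
      (2 * (2 * u x₀ * u' x₀) - 2 * u'' x₀ + 1) x₀ := by
    have := (((hu x₀ hx₀).pow 2).const_mul 2).sub ((hu' x₀ hx₀).const_mul 2)
      |>.add (hasDerivAt_id x₀)
    convert this using 1
    · rfl
    · rfl
    · funext x; simp [piiF]
    · norm_num
  convert h1 using 1
  have hp := hPII x₀ hx₀
  have hf : 2 * (u x₀) ^ 2 - 2 * u' x₀ + x₀ = 0 := hfx₀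
  have h2 : u' x₀ = (u x₀) ^ 2 + x₀ / 2 := by linarith
  rw [hp, h2]; ring
end

section
/- Let α ∈ ℝ with α ≠ −1/2, let I ⊆ ℝ be an open interval, and let u : I → ℝ be twice differentiable and satisfy u''(x) = 2u(x)³ + x·u(x) − α on I. Then the function f(x) := 2u(x)² − 2u'(x) + x has at most one zero in I; that is, if x₀, x₁ ∈ I satisfy f(x₀) = f(x₁) = 0, then x₀ = x₁. Moreover, any zero of f in I is simple. -/
open Filter Topology Set

/-- if `α ≠ -1/2` and `u` solves the inhomogeneous Painlevé II
equation `u'' = 2 u^3 + x u - α` on an open interval `I`, then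
`f = 2 u^2 - 2 u' + x` has at most one zero in `I`, and every zero of `f`
in `I` is simple (the derivative of `f` does not vanish there). -/
theorem piiF_at_most_one_zero (α : ℝ) (hα : α ≠ -1/2) (I : Set ℝ)
    (hIopen : IsOpen I) (hIconn : I.OrdConnected) (u u' u'' : ℝ → ℝ)
    (hu : ∀ x ∈ I, HasDerivAt u (u' x) x)
    (hu' : ∀ x ∈ I, HasDerivAt u' (u'' x) x)
    (hPII : ∀ x ∈ I, u'' x = 2 * (u x) ^ 3 + x * u x - α) :
    (∀ x₀ ∈ I, ∀ x₁ ∈ I, piiF u u' x₀ = 0 → piiF u u' x₁ = 0 → x₀ = x₁) ∧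
    (∀ z ∈ I, piiF u u' z = 0 → deriv (piiF u u') z ≠ 0) := by
  set c : ℝ := 2 * α + 1 with hc_def
  have hc : c ≠ 0 := by
    intro h
    apply hα
    linarith [h]
  -- the basic Riccati-type identity for f
  have hf' : ∀ x ∈ I, HasDerivAt (piiF u u')
      (-2 * u x * piiF u u' x + c) x := by
    intro x hx
    have h1 : HasDerivAt (fun y => 2 * (u y) ^ 2 - 2 * u' y + y)
        (2 * (2 * u x * u' x) - 2 * u'' x + 1) x := by
      have := (((hu x hx).pow 2).const_mul 2).sub ((hu' x hx).const_mul 2)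
      have h2 := this.add (hasDerivAt_id x)
      refine h2.congr_deriv ?_
      ring
    have heq : 2 * (2 * u x * u' x) - 2 * u'' x + 1
        = -2 * u x * piiF u u' x + c := by
      rw [hPII x hx]
      simp only [piiF, hc_def]
      ring
    rw [heq] at h1
    exact h1
  have huc : ContinuousOn u I := fun x hx => (hu x hx).continuousAt.continuousWithinAt
  constructor
  · -- at most one zero
    intro x₀ hx₀ x₁ hx₁ h₀ h₁
    -- antiderivative of u starting at x₀
    set U : ℝ → ℝ := fun x => ∫ t in x₀..x, u t with hU_def
    have hU : ∀ x ∈ I, HasDerivAt U (u x) x := by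
      intro x hx
      refine intervalIntegral.integral_hasDerivAt_right ?_ ?_ ?_
      · exact (huc.mono (hIconn.uIcc_subset hx₀ hx)).intervalIntegrable
      · exact huc.stronglyMeasurableAtFilter hIopen x hx
      · exact (hu x hx).continuousAt
    set h : ℝ → ℝ := fun x => c⁻¹ * (piiF u u' x * Real.exp (2 * U x)) with hh_def
    have hh : ∀ x ∈ I, HasDerivAt h (Real.exp (2 * U x)) x := by
      intro x hx
      have hexp : HasDerivAt (fun y => Real.exp (2 * U y))
          (Real.exp (2 * U x) * (2 * u x)) x := ((hU x hx).const_mul 2).exp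
      have := (((hf' x hx).mul hexp).const_mul c⁻¹)
      refine this.congr_deriv ?_
      field_simp
      ring
    have hmono : StrictMonoOn h I := by
      refine strictMonoOn_of_hasDerivWithinAt_pos (f' := fun x => Real.exp (2 * U x)) ?_ ?_ ?_ ?_
      · exact (convex_iff_ordConnected.mpr hIconn)
      · exact fun x hx => (hh x hx).continuousAt.continuousWithinAt
      · intro x hx
        rw [hIopen.interior_eq] at hx
        exact (hh x hx).hasDerivWithinAt
      · intro x hx
        exact Real.exp_pos _
    have hz₀ : h x₀ = 0 := by simp [hh_def, h₀]
    have hz₁ : h x₁ = 0 := by simp [hh_def, h₁]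
    exact hmono.injOn hx₀ hx₁ (hz₀.trans hz₁.symm)
  · -- simple zeros
    intro z hz hfz
    rw [(hf' z hz).deriv, hfz]
    simpa using hc
end

section
/- Let α ∈ ℝ, let I ⊆ ℝ be an open interval, and let u : I → ℝ be twice differentiable and satisfy u''(x) = 2u(x)³ + x·u(x) − α on I. Suppose f(x) := 2u(x)² − 2u'(x) + x is nonzero on I. Then the Bäcklund transform v(x) := −u(x) + (2α+1)/f(x) is twice differentiable on I and satisfies v''(x) = 2v(x)³ + x·v(x) − (α+1) for all x ∈ I, i.e. v solves PII with parameter α + 1. -/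
open Filter Topology Set

/-- The Bäcklund transform `v(x) = -u(x) + (2α+1)/f(x)` of a solution `u`
of Painlevé II with parameter `α`. -/
noncomputable def backlund (α : ℝ) (u u' : ℝ → ℝ) : ℝ → ℝ :=
  fun x => -u x + (2 * α + 1) / piiF u u' x

/-- if `u` solves Painlevé II with parameter `α` on an open
interval `I` and `f = 2 u^2 - 2 u' + x` does not vanish on `I`, then the
Bäcklund transform `v = -u + (2α+1)/f` is twice differentiable on `I` and
solves Painlevé II with parameter `α + 1` there. -/
theorem backlund_solves_PII (α : ℝ) (I : Set ℝ) (hIopen : IsOpen I)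
    (hIconn : I.OrdConnected) (u u' u'' : ℝ → ℝ)
    (hu : ∀ x ∈ I, HasDerivAt u (u' x) x)
    (hu' : ∀ x ∈ I, HasDerivAt u' (u'' x) x)
    (hPII : ∀ x ∈ I, u'' x = 2 * (u x) ^ 3 + x * u x - α)
    (hf : ∀ x ∈ I, piiF u u' x ≠ 0) :
    ∃ v' v'' : ℝ → ℝ,
      (∀ x ∈ I, HasDerivAt (backlund α u u') (v' x) x) ∧
      (∀ x ∈ I, HasDerivAt v' (v'' x) x) ∧
      (∀ x ∈ I, v'' x = 2 * (backlund α u u' x) ^ 3 + x * backlund α u u' x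
        - (α + 1)) := by
  set F' : ℝ → ℝ := fun x => 4 * u x * u' x - 2 * u'' x + 1 with hF'
  set F'' : ℝ → ℝ := fun x =>
    4 * (u' x) ^ 2 + 4 * u x * u'' x
      - 2 * (6 * (u x) ^ 2 * u' x + u x + x * u' x) with hF''
  -- derivative of piiF
  have hfd : ∀ x ∈ I, HasDerivAt (piiF u u') (F' x) x := by
    intro x hx
    have h := ((((hu x hx).pow 2).const_mul 2).sub ((hu' x hx).const_mul 2)).add
      (hasDerivAt_id x)
    refine h.congr_deriv ?_
    simp [hF']
    ring
  -- third derivative of u (derivative of u'')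
  have hu''d : ∀ x ∈ I, HasDerivAt u''
      (6 * (u x) ^ 2 * u' x + u x + x * u' x) x := by
    intro x hx
    have hw : HasDerivAt (fun y => 2 * (u y) ^ 3 + y * u y - α)
        (2 * (3 * (u x) ^ 2 * u' x) + (1 * u x + x * u' x) - 0) x := by
      exact ((((hu x hx).pow 3).const_mul 2).add
        ((hasDerivAt_id x).mul (hu x hx))).sub (hasDerivAt_const x α)
    have heq : u'' =ᶠ[𝓝 x] (fun y => 2 * (u y) ^ 3 + y * u y - α) :=
      eventually_of_mem (hIopen.mem_nhds hx) (fun y hy => hPII y hy)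
    have := hw.congr_of_eventuallyEq heq
    refine this.congr_deriv ?_
    ring
  -- derivative of F'
  have hF'd : ∀ x ∈ I, HasDerivAt F' (F'' x) x := by
    intro x hx
    have h := (((((hu x hx).const_mul 4).mul (hu' x hx)).sub
      ((hu''d x hx).const_mul 2)).add_const 1)
    refine h.congr_deriv ?_
    simp [hF'', hF']
    ring
  refine ⟨fun x => -u' x - (2 * α + 1) * F' x / (piiF u u' x) ^ 2,
    fun x => -u'' x - (2 * α + 1) *
      (F'' x * (piiF u u' x) ^ 2 - 2 * piiF u u' x * F' x * F' x) /
      ((piiF u u' x) ^ 2) ^ 2, ?_, ?_, ?_⟩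
  · intro x hx
    have hq : HasDerivAt (fun y => (2 * α + 1) / piiF u u' y)
        ((0 * piiF u u' x - (2 * α + 1) * F' x) / (piiF u u' x) ^ 2) x :=
      (hasDerivAt_const x (2 * α + 1)).div (hfd x hx) (hf x hx)
    have h := (hu x hx).neg.add hq
    refine h.congr_deriv ?_
    ring
  · intro x hx
    have hq : HasDerivAt (fun y => (2 * α + 1) * F' y / (piiF u u' y) ^ 2)
        (((2 * α + 1) * F'' x * (piiF u u' x) ^ 2 -
          (2 * α + 1) * F' x * (2 * piiF u u' x ^ (2 - 1) * F' x)) /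
          ((piiF u u' x) ^ 2) ^ 2) x :=
      ((hF'd x hx).const_mul (2 * α + 1)).div ((hfd x hx).pow 2)
        (pow_ne_zero 2 (hf x hx))
    have h := (hu' x hx).neg.sub hq
    refine h.congr_deriv ?_
    have hne := hf x hx
    field_simp
    ring
  · intro x hx
    have hne := hf x hx
    have hode := hPII x hx
    simp only [backlund, piiF, hF', hF''] at *
    have hne' : 2 * (u x ^ 2 - u' x) + x ≠ 0 := by rw [mul_sub]; exact hne
    field_simp
    rw [hode]
    ring
end

section
/- Let α ∈ ℝ, p ∈ ℂ, r > 0, and let u be analytic on the punctured disc {z ∈ ℂ : 0 < |z − p| < r} and satisfy u''(z) = 2u(z)³ + z·u(z) − α there. Suppose u has a simple pole at p with residue +1, i.e. (z − p)·u(z) → 1 as z → p. Then the function g(z) := u(z) − 1/(z − p) extends to a function analytic at p with g(p) = 0, g'(p) = −p/6, and g''(p) = (α − 1)/2; equivalently, u(z) = 1/(z − p) − (p/6)(z − p) + ((α − 1)/4)(z − p)² + O((z − p)³) as z → p. -/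
open Filter Topology Set Metric

open Function


lemma pii_an_deriv {f : ℂ → ℂ} {x : ℂ} (h : AnalyticAt ℂ f x) : AnalyticAt ℂ (deriv f) x := by
  obtain ⟨s, hs, h⟩ := h.exists_mem_nhds_analyticOnNhd
  exact h.deriv x (mem_of_mem_nhds hs)

lemma pii_an_dslope {f : ℂ → ℂ} {x : ℂ} (h : AnalyticAt ℂ f x) :
    AnalyticAt ℂ (dslope f x) x := by
  obtain ⟨q, hq⟩ := h
  exact ⟨_, hq.has_fpower_series_dslope_fslope⟩

lemma pii_eval {A B : ℂ → ℂ} {p : ℂ} (h : ∀ᶠ z in 𝓝[≠] p, A z = B z)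
    (hA : ContinuousAt A p) (hB : ContinuousAt B p) : A p = B p :=
  tendsto_nhds_unique (hA.continuousWithinAt.tendsto.congr' h) hB.continuousWithinAt.tendsto

lemma pii_ev_nhds {P : ℂ → Prop} {p : ℂ} (h : ∀ᶠ z in 𝓝[≠] p, P z) :
    ∀ᶠ z in 𝓝[≠] p, ∀ᶠ w in 𝓝 z, P w := by
  rw [eventually_nhdsWithin_iff] at h ⊢
  filter_upwards [h.eventually_nhds] with z hz hzp
  filter_upwards [hz, isOpen_compl_singleton.mem_nhds hzp] with w hw hwp
  exact hw hwp


/-- if `u` is analytic on the punctured disc of radius `r`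
around `p`, solves `u'' = 2 u^3 + z u - α` there, and has a simple pole at
`p` with residue `+1`, then `g(z) = u(z) - 1/(z-p)` extends analytically to
`p` with `g(p) = 0`, `g'(p) = -p/6` and `g''(p) = (α-1)/2`. -/
theorem pii_laurent_residue_plus_one (α : ℝ) (p : ℂ) (r : ℝ) (hr : 0 < r)
    (u : ℂ → ℂ) (hu : AnalyticOnNhd ℂ u (ball p r \ {p}))
    (hPII : ∀ z ∈ ball p r \ {p},
      deriv (deriv u) z = 2 * (u z) ^ 3 + z * u z - (α : ℂ))
    (hpole : Tendsto (fun z => (z - p) * u z) (𝓝[≠] p) (𝓝 1)) :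
    ∃ G : ℂ → ℂ, AnalyticAt ℂ G p ∧
      (∀ᶠ z in 𝓝[≠] p, G z = u z - 1 / (z - p)) ∧
      G p = 0 ∧ deriv G p = -p / 6 ∧
      deriv (deriv G) p = ((α : ℂ) - 1) / 2 := by
  have hne : ∀ᶠ z in 𝓝[≠] p, z ≠ p := eventually_mem_nhdsWithin
  have hmem : ∀ᶠ z in 𝓝[≠] p, z ∈ ball p r \ {p} := by
    rw [eventually_nhdsWithin_iff]
    filter_upwards [ball_mem_nhds p hr] with z hz hzp
    exact ⟨hz, hzp⟩
  set F : ℂ → ℂ := fun z => (z - p) * u z with hF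
  set f : ℂ → ℂ := Function.update F p 1 with hf
  have hfF : ∀ z : ℂ, z ≠ p → f z = F z := fun z hz => Function.update_of_ne hz _ _
  have hfp : f p = 1 := Function.update_self _ _ _
  have hfan : AnalyticAt ℂ f p := by
    apply Complex.analyticAt_of_differentiable_on_punctured_nhds_of_continuousAt
    · filter_upwards [hmem, hne] with z hz hzp
      have hFd : DifferentiableAt ℂ F z :=
        ((differentiableAt_id.sub_const p)).mul (hu z hz).differentiableAt
      have heq : f =ᶠ[𝓝 z] F := by
        filter_upwards [isOpen_compl_singleton.mem_nhds hzp] with w hw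
        exact hfF w hw
      exact hFd.congr_of_eventuallyEq heq
    · rw [hf, continuousAt_update_same]
      exact hpole
  set G : ℂ → ℂ := dslope f p with hG
  have hGan : AnalyticAt ℂ G p := pii_an_dslope hfan
  -- G = u - 1/(z-p) on punctured nbhd
  have hGu : ∀ᶠ z in 𝓝[≠] p, G z = u z - 1 / (z - p) := by
    filter_upwards [hne] with z hz
    have hz' : z - p ≠ 0 := sub_ne_zero.2 hz
    rw [hG, dslope_of_ne _ hz, slope_def_field, hfp, hfF z hz, hF]
    field_simp
  have huG : ∀ᶠ z in 𝓝[≠] p, u z = G z + (z - p)⁻¹ := by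
    filter_upwards [hGu, hne] with z h hz
    have hz' : z - p ≠ 0 := sub_ne_zero.2 hz
    rw [h]; field_simp; ring
  -- analyticity of derivatives
  have hdGan : AnalyticAt ℂ (deriv G) p := pii_an_deriv hGan
  have hddGan : AnalyticAt ℂ (deriv (deriv G)) p := pii_an_deriv hdGan
  have hGev : ∀ᶠ z in 𝓝 p, AnalyticAt ℂ G z := hGan.eventually_analyticAt
  -- first derivative of u on punctured nbhd
  have hE1 : ∀ᶠ z in 𝓝[≠] p, deriv u z = deriv G z - ((z - p) ^ 2)⁻¹ := by
    filter_upwards [pii_ev_nhds huG, hGev.filter_mono nhdsWithin_le_nhds, hne]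
      with z hzev hGz hzp
    have hz' : z - p ≠ 0 := sub_ne_zero.2 hzp
    have hd : HasDerivAt (fun w => G w + (w - p)⁻¹)
        (deriv G z + -1 / (z - p) ^ 2) z :=
      (hGz.differentiableAt.hasDerivAt).add (((hasDerivAt_id z).sub_const p).inv hz')
    rw [Filter.EventuallyEq.deriv_eq hzev, hd.deriv]
    ring
  -- second derivative of u on punctured nbhd
  have hE2 : ∀ᶠ z in 𝓝[≠] p, deriv (deriv u) z
      = deriv (deriv G) z + 2 * ((z - p) ^ 3)⁻¹ := by
    filter_upwards [pii_ev_nhds hE1, hGev.filter_mono nhdsWithin_le_nhds, hne]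
      with z hzev hGz hzp
    have hz' : z - p ≠ 0 := sub_ne_zero.2 hzp
    have hdG : AnalyticAt ℂ (deriv G) z := pii_an_deriv hGz
    have hinv : HasDerivAt (fun w => ((w - p) ^ 2)⁻¹)
        (-(2 * (z - p) ^ 1 * 1) / ((z - p) ^ 2) ^ 2) z :=
      (((hasDerivAt_id z).sub_const p).pow 2).inv (pow_ne_zero 2 hz')
    have hd : HasDerivAt (fun w => deriv G w - ((w - p) ^ 2)⁻¹)
        (deriv (deriv G) z - -(2 * (z - p) ^ 1 * 1) / ((z - p) ^ 2) ^ 2) z :=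
      (hdG.differentiableAt.hasDerivAt).sub hinv
    rw [Filter.EventuallyEq.deriv_eq hzev, hd.deriv]
    field_simp
    ring
  -- the ODE as eventual statement
  have hODE : ∀ᶠ z in 𝓝[≠] p, deriv (deriv u) z = 2 * (u z) ^ 3 + z * u z - (α : ℂ) :=
    hmem.mono fun z hz => hPII z hz
  -- KEY IDENTITY E1'
  have hK1 : ∀ᶠ z in 𝓝[≠] p, (z - p) ^ 2 * deriv (deriv G) z
      = 6 * G z + 6 * (z - p) * (G z) ^ 2 + 2 * (z - p) ^ 2 * (G z) ^ 3
        + z * (z - p) + z * (z - p) ^ 2 * G z - (α : ℂ) * (z - p) ^ 2 := by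
    filter_upwards [hE2, hODE, huG, hne] with z h2 hO hu' hzp
    have hz' : z - p ≠ 0 := sub_ne_zero.2 hzp
    have hcube : (z - p) ^ 3 * deriv (deriv u) z = (z - p) ^ 3 * deriv (deriv G) z + 2 := by
      rw [h2]; field_simp
    have hmul : (z - p) * u z = 1 + (z - p) * G z := by
      rw [hu']; field_simp; ring
    apply mul_left_cancel₀ hz'
    linear_combination (z - p) ^ 3 * hO - hcube
      + (2 * (((z - p) * u z) ^ 2 + ((z - p) * u z) * (1 + (z - p) * G z)
          + (1 + (z - p) * G z) ^ 2) + z * (z - p) ^ 2) * hmul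
  -- continuity facts
  have hcG : ContinuousAt G p := hGan.continuousAt
  have hcdG : ContinuousAt (deriv G) p := hdGan.continuousAt
  have hcddG : ContinuousAt (deriv (deriv G)) p := hddGan.continuousAt
  -- G p = 0
  have hGp0 : G p = 0 := by
    have key := pii_eval hK1 (by fun_prop) (by fun_prop)
    simp at key
    exact key
  -- G₁ := dslope G p
  set G₁ : ℂ → ℂ := dslope G p with hG₁def
  have hG₁an : AnalyticAt ℂ G₁ p := pii_an_dslope hGan
  have hG₁p : G₁ p = deriv G p := dslope_same _ _
  have hG₁ : ∀ z : ℂ, G z = (z - p) * G₁ z := by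
    intro z
    rcases eq_or_ne z p with rfl | hz
    · simp [hGp0]
    · rw [hG₁def, dslope_of_ne _ hz, slope_def_field, hGp0, sub_zero,
        mul_comm, div_mul_cancel₀ _ (sub_ne_zero.2 hz)]
  have hcG₁ : ContinuousAt G₁ p := hG₁an.continuousAt
  -- key identity E2
  have hK2 : ∀ᶠ z in 𝓝[≠] p, (z - p) * deriv (deriv G) z
      = 6 * G₁ z + 6 * (z - p) ^ 2 * (G₁ z) ^ 2 + 2 * (z - p) ^ 4 * (G₁ z) ^ 3
        + z + z * (z - p) ^ 2 * G₁ z - (α : ℂ) * (z - p) := by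
    filter_upwards [hK1, hne] with z h1 hzp
    have hz' : z - p ≠ 0 := sub_ne_zero.2 hzp
    rw [hG₁ z] at h1
    apply mul_left_cancel₀ hz'
    linear_combination h1
  -- deriv G p = -p/6
  have hdGp : deriv G p = -p / 6 := by
    have key := pii_eval hK2 (by fun_prop) (by fun_prop)
    simp at key
    rw [← hG₁p]
    linear_combination -key / 6
  have hG₁pval : G₁ p = -p / 6 := by rw [hG₁p, hdGp]
  -- G₂ := dslope G₁ p
  set G₂ : ℂ → ℂ := dslope G₁ p with hG₂def
  have hG₂an : AnalyticAt ℂ G₂ p := pii_an_dslope hG₁an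
  have hG₂p : G₂ p = deriv G₁ p := dslope_same _ _
  have hG₂ : ∀ z : ℂ, z ≠ p → G₁ z = -p / 6 + (z - p) * G₂ z := by
    intro z hz
    rw [hG₂def, dslope_of_ne _ hz, slope_def_field, hG₁pval,
      mul_comm, div_mul_cancel₀ _ (sub_ne_zero.2 hz)]
    ring
  have hcG₂ : ContinuousAt G₂ p := hG₂an.continuousAt
  -- key identity E3
  have hK3 : ∀ᶠ z in 𝓝[≠] p, deriv (deriv G) z
      = 6 * G₂ z + 1 + 6 * (z - p) * (G₁ z) ^ 2 + 2 * (z - p) ^ 3 * (G₁ z) ^ 3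
        + z * (z - p) * G₁ z - (α : ℂ) := by
    filter_upwards [hK2, hne] with z h2 hzp
    have hz' : z - p ≠ 0 := sub_ne_zero.2 hzp
    apply mul_left_cancel₀ hz'
    linear_combination h2 + 6 * hG₂ z hzp
  -- limit of E3
  have hlim3 : deriv (deriv G) p = 6 * G₂ p + 1 - (α : ℂ) := by
    have key := pii_eval hK3 (by fun_prop) (by fun_prop)
    simp at key
    linear_combination key
  -- second derivative relation : deriv (deriv G) p = 2 * deriv G₁ p
  have hGfun : G = fun z => (z - p) * G₁ z := funext hG₁
  have hdG_eq : ∀ᶠ z in 𝓝 p, deriv G z = G₁ z + (z - p) * deriv G₁ z := by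
    filter_upwards [hG₁an.eventually_analyticAt] with z hz
    have hd : HasDerivAt (fun w => (w - p) * G₁ w)
        (1 * G₁ z + (z - p) * deriv G₁ z) z :=
      ((hasDerivAt_id z).sub_const p).mul hz.differentiableAt.hasDerivAt
    rw [hGfun, hd.deriv]
    ring
  have hddG2 : deriv (deriv G) p = 2 * deriv G₁ p := by
    rw [Filter.EventuallyEq.deriv_eq hdG_eq]
    have hd : HasDerivAt (fun z => G₁ z + (z - p) * deriv G₁ z)
        (deriv G₁ p + (1 * deriv G₁ p + (p - p) * deriv (deriv G₁) p)) p :=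
      (hG₁an.differentiableAt.hasDerivAt).add
        (((hasDerivAt_id p).sub_const p).mul
          ((pii_an_deriv hG₁an).differentiableAt.hasDerivAt))
    rw [hd.deriv]
    ring
  have hG₂pval : G₂ p = ((α : ℂ) - 1) / 4 := by
    rw [hG₂p] at hlim3 ⊢
    have : 2 * deriv G₁ p = 6 * deriv G₁ p + 1 - (α : ℂ) := by
      rw [← hddG2]; exact hlim3
    linear_combination -this / 4
  have hddGp : deriv (deriv G) p = ((α : ℂ) - 1) / 2 := by
    rw [hddG2, ← hG₂p, hG₂pval]; ring
  exact ⟨G, hGan, hGu, hGp0, hdGp, hddGp⟩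
end

section
/- Let α > −1/2, let (a, b) be an open interval with a ∈ ℝ ∪ {−∞} and b ∈ ℝ ∪ {+∞}, and let u : (a, b) → ℝ be twice differentiable and satisfy u''(x) = 2u(x)³ + x·u(x) − α on (a, b). Suppose f(x) := 2u(x)² − 2u'(x) + x satisfies f(x) → +∞ as x → a⁺ and f(x) → +∞ as x → b⁻. Then f(x) ≠ 0 for all x ∈ (a, b). -/
open Filter Topology Set

/-- The open interval `(a, b) ⊆ ℝ` with extended-real endpoints
`a ∈ ℝ ∪ {-∞}`, `b ∈ ℝ ∪ {+∞}`. -/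
def erealIoo (a b : EReal) : Set ℝ := {x : ℝ | a < (x : ℝ) ∧ ((x : ℝ) : EReal) < b}

/-- The filter of real numbers tending to the extended real `a` from the
right (this is `𝓝[>] a` if `a` is real, and `atBot` if `a = -∞`). -/
noncomputable def fromRight (a : EReal) : Filter ℝ :=
  Filter.comap (fun x : ℝ => (x : EReal)) (𝓝[>] a)

/-- The filter of real numbers tending to the extended real `b` from the
left (this is `𝓝[<] b` if `b` is real, and `atTop` if `b = +∞`). -/
noncomputable def fromLeft (b : EReal) : Filter ℝ :=
  Filter.comap (fun x : ℝ => (x : EReal)) (𝓝[<] b)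

/-- let `α > -1/2` and let `u` solve Painlevé II with
parameter `α` on the open interval `(a, b)` (with `a ∈ ℝ ∪ {-∞}`,
`b ∈ ℝ ∪ {+∞}`).  If `f = 2 u^2 - 2 u' + x` tends to `+∞` at both endpoints
of `(a, b)`, then `f` has no zero in `(a, b)`. -/
theorem piiF_no_zero_between (α : ℝ) (hα : -1/2 < α) (a b : EReal)
    (hab : a < b) (u u' u'' : ℝ → ℝ)
    (hu : ∀ x ∈ erealIoo a b, HasDerivAt u (u' x) x)
    (hu' : ∀ x ∈ erealIoo a b, HasDerivAt u' (u'' x) x)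
    (hPII : ∀ x ∈ erealIoo a b, u'' x = 2 * (u x) ^ 3 + x * u x - α)
    (hfa : Tendsto (piiF u u') (fromRight a) atTop)
    (hfb : Tendsto (piiF u u') (fromLeft b) atTop) :
    ∀ x ∈ erealIoo a b, piiF u u' x ≠ 0 := by
  intro x₀ hx₀ hf0
  obtain ⟨hax₀, hx₀b⟩ := hx₀
  set f := piiF u u' with hf
  -- derivative of f on the interval
  have hder : ∀ y ∈ erealIoo a b,
      HasDerivAt f (2 * ((2:ℕ) * u y ^ 1 * u' y) - 2 * u'' y + 1) y := by
    intro y hy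
    have h1 : HasDerivAt (fun x => 2 * (u x) ^ 2 - 2 * u' x)
        (2 * ((2:ℕ) * u y ^ 1 * u' y) - 2 * u'' y) y :=
      (((hu y hy).pow 2).const_mul 2).sub ((hu' y hy).const_mul 2)
    exact h1.add (hasDerivAt_id y)
  -- f is positive near a
  have hpos : ∀ᶠ x in fromRight a, 0 < f x := hfa.eventually_gt_atTop 0
  simp only [fromRight] at hpos
  obtain ⟨V, hV, hVsub⟩ := Filter.mem_comap.mp hpos
  obtain ⟨t, ht, htV⟩ := (mem_nhdsGT_iff_exists_Ioo_subset' hax₀).mp hV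
  have hamin : a < min t ((x₀ : ℝ) : EReal) := lt_min ht hax₀
  obtain ⟨c, hac, hcmin⟩ := EReal.exists_between_coe_real hamin
  have hct : ((c : ℝ) : EReal) < t := hcmin.trans_le (min_le_left _ _)
  have hcx₀ : c < x₀ := by exact_mod_cast hcmin.trans_le (min_le_right _ _)
  have hfc : 0 < f c := hVsub (htV ⟨hac, hct⟩)
  -- the interval [c, x₀] lies in the domain
  have hsub : Icc c x₀ ⊆ erealIoo a b := by
    intro y hy
    exact ⟨lt_of_lt_of_le hac (EReal.coe_le_coe_iff.mpr hy.1),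
      lt_of_le_of_lt (EReal.coe_le_coe_iff.mpr hy.2) hx₀b⟩
  have hcont : ContinuousOn f (Icc c x₀) := fun y hy =>
    ((hder y (hsub hy)).continuousAt).continuousWithinAt
  -- least zero of f in [c, x₀]
  set Z : Set ℝ := Icc c x₀ ∩ f ⁻¹' {0} with hZ
  have hZclosed : IsClosed Z :=
    hcont.preimage_isClosed_of_isClosed isClosed_Icc isClosed_singleton
  have hZcomp : IsCompact Z :=
    isCompact_Icc.of_isClosed_subset hZclosed inter_subset_left
  have hZne : Z.Nonempty := ⟨x₀, ⟨⟨hcx₀.le, le_rfl⟩, hf0⟩⟩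
  obtain ⟨x₁, hx₁Z, hx₁least⟩ := hZcomp.exists_isLeast hZne
  have hfx₁ : f x₁ = 0 := hx₁Z.2
  have hc_lt_x₁ : c < x₁ := by
    rcases lt_or_eq_of_le hx₁Z.1.1 with h | h
    · exact h
    · exact absurd hfx₁ (by rw [← h]; exact hfc.ne')
  -- f is positive on [c, x₁)
  have hfpos : ∀ y ∈ Ico c x₁, 0 < f y := by
    intro y hy
    by_contra h
    push_neg at h
    have hyx₀ : y ≤ x₀ := hy.2.le.trans hx₁Z.1.2
    have hsub2 : Icc c y ⊆ Icc c x₀ := Icc_subset_Icc le_rfl hyx₀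
    have h0 : (0:ℝ) ∈ Icc (f y) (f c) := ⟨h, hfc.le⟩
    obtain ⟨z, hz, hfz⟩ := intermediate_value_Icc' hy.1 (hcont.mono hsub2) h0
    have hzZ : z ∈ Z := ⟨hsub2 hz, hfz⟩
    exact absurd (hx₁least hzZ) (not_le.mpr (lt_of_le_of_lt hz.2 hy.2))
  -- the derivative of f at x₁ is 2α+1 > 0
  have hx₁mem : x₁ ∈ erealIoo a b := hsub hx₁Z.1
  have hd : HasDerivAt f (2 * α + 1) x₁ := by
    have h := hder x₁ hx₁mem
    have hp := hPII x₁ hx₁mem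
    have h0 : 2 * (u x₁) ^ 2 - 2 * u' x₁ + x₁ = 0 := hfx₁
    have : 2 * ((2:ℕ) * u x₁ ^ 1 * u' x₁) - 2 * u'' x₁ + 1 = 2 * α + 1 := by
      rw [hp]; push_cast; linear_combination (-2 * u x₁) * h0
    rwa [this] at h
  have hslope := hasDerivAt_iff_tendsto_slope.mp hd
  have hev : ∀ᶠ y in 𝓝[≠] x₁, 0 < slope f x₁ y :=
    hslope.eventually (eventually_gt_nhds (by linarith))
  have hev' : ∀ᶠ y in 𝓝[<] x₁, 0 < slope f x₁ y :=
    hev.filter_mono (nhdsWithin_mono x₁ fun y hy => ne_of_lt hy)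
  have hmem : Ico c x₁ ∈ 𝓝[<] x₁ := Ico_mem_nhdsLT hc_lt_x₁
  obtain ⟨y, hy1, hy2⟩ := (hev'.and (eventually_of_mem hmem fun y hy => hy)).exists
  have hylt : y < x₁ := hy2.2
  have hfy : 0 < f y := hfpos y hy2
  rw [slope_def_field, hfx₁] at hy1
  have hneg : (f y - 0) / (y - x₁) < 0 :=
    div_neg_of_pos_of_neg (by linarith) (by linarith)
  linarith
end

section
/- Let α ∈ ℝ with α ≠ −1/2, let (a, b) be an open interval with a ∈ ℝ ∪ {−∞} and b ∈ ℝ ∪ {+∞}, and let u : (a, b) → ℝ be twice differentiable and satisfy u''(x) = 2u(x)³ + x·u(x) − α on (a, b). Suppose f(x) := 2u(x)² − 2u'(x) + x satisfies f(x₀) < 0 for some x₀ ∈ (a, b) and f(x) → +∞ as x → b⁻. Then there is exactly one point z ∈ (a, b) with f(z) = 0; moreover z > x₀ and f'(z) = 2α + 1. -/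
open Filter Topology Set

/-- let `α ≠ -1/2` and let `u` solve Painlevé II with
parameter `α` on the open interval `(a, b)` (with `a ∈ ℝ ∪ {-∞}`,
`b ∈ ℝ ∪ {+∞}`).  If `f = 2 u^2 - 2 u' + x` is negative somewhere in
`(a, b)` and tends to `+∞` at the right endpoint, then `f` has exactly one
zero `z` in `(a, b)`; moreover `z > x₀` and `f'(z) = 2α + 1`. -/
theorem piiF_exactly_one_zero (α : ℝ) (hα : α ≠ -1/2) (a b : EReal)
    (hab : a < b) (u u' u'' : ℝ → ℝ)
    (hu : ∀ x ∈ erealIoo a b, HasDerivAt u (u' x) x)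
    (hu' : ∀ x ∈ erealIoo a b, HasDerivAt u' (u'' x) x)
    (hPII : ∀ x ∈ erealIoo a b, u'' x = 2 * (u x) ^ 3 + x * u x - α)
    (x₀ : ℝ) (hx₀ : x₀ ∈ erealIoo a b) (hfx₀ : piiF u u' x₀ < 0)
    (hfb : Tendsto (piiF u u') (fromLeft b) atTop) :
    ∃ z ∈ erealIoo a b, piiF u u' z = 0 ∧ x₀ < z ∧
      HasDerivAt (piiF u u') (2 * α + 1) z ∧
      ∀ w ∈ erealIoo a b, piiF u u' w = 0 → w = z := by
  set S := erealIoo a b with hS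
  set f := piiF u u' with hfdef
  have hSopen : IsOpen S := by
    have : S = Real.toEReal ⁻¹' (Set.Ioo a b) := rfl
    rw [this]; exact isOpen_Ioo.preimage continuous_coe_real_ereal
  have hSord : S.OrdConnected := by
    constructor
    rintro x ⟨hx1, hx2⟩ y ⟨hy1, hy2⟩ z ⟨hz1, hz2⟩
    exact ⟨lt_of_lt_of_le hx1 (by exact_mod_cast hz1),
      lt_of_le_of_lt (by exact_mod_cast hz2) hy2⟩
  have hSconv : Convex ℝ S := convex_iff_ordConnected.mpr hSord
  -- derivative of f
  have hfderiv : ∀ x ∈ S, HasDerivAt f (-(2 * u x) * f x + (2 * α + 1)) x := by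
    intro x hx
    have h1 := hu x hx
    have h2 := hu' x hx
    have h3 : HasDerivAt f (2 * (2 * u x * u' x) - 2 * u'' x + 1) x := by
      have := (((h1.pow 2).const_mul 2).sub (h2.const_mul 2)).add (hasDerivAt_id x)
      convert this using 1
      exacts [rfl, rfl, rfl, by simp]
    convert h3 using 1
    rw [hPII x hx]
    simp only [hfdef, piiF]
    ring
  have hcontu : ContinuousOn u S := fun x hx => (hu x hx).continuousAt.continuousWithinAt
  have hcontf : ContinuousOn f S := fun x hx => (hfderiv x hx).continuousAt.continuousWithinAt
  set V : ℝ → ℝ := fun x => ∫ t in x₀..x, 2 * u t with hV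
  have hc2 : ContinuousOn (fun t => 2 * u t) S := continuousOn_const.mul hcontu
  have hVderiv : ∀ x ∈ S, HasDerivAt V (2 * u x) x := by
    intro x hx
    have hint : IntervalIntegrable (fun t => 2 * u t) MeasureTheory.volume x₀ x :=
      (hc2.mono (hSord.uIcc_subset hx₀ hx)).intervalIntegrable
    exact intervalIntegral.integral_hasDerivAt_right hint
      (hc2.stronglyMeasurableAtFilter hSopen x hx)
      (hc2.continuousAt (hSopen.mem_nhds hx))
  set g : ℝ → ℝ := fun x => f x * Real.exp (V x) with hg
  have hgderiv : ∀ x ∈ S, HasDerivAt g ((2 * α + 1) * Real.exp (V x)) x := by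
    intro x hx
    have := (hfderiv x hx).mul ((hVderiv x hx).exp)
    convert this using 1
    exacts [rfl, rfl, rfl, by ring]
  have hcontg : ContinuousOn g S := fun x hx => (hgderiv x hx).continuousAt.continuousWithinAt
  -- find a point x₁ > x₀ in S with f x₁ ≥ 1
  have hx₀b : (↑x₀ : EReal) < b := hx₀.2
  have hmaxlt : max a (↑x₀ : EReal) < b := max_lt hab hx₀b
  have hIoo_mem : Ioo (max a (↑x₀ : EReal)) b ∈ 𝓝[<] b :=
    Ioo_mem_nhdsLT_of_mem ⟨hmaxlt, le_refl b⟩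
  have hneBot : (fromLeft b).NeBot := by
    rw [fromLeft, comap_neBot_iff]
    intro t ht
    have hnb : (𝓝[<] b).NeBot := nhdsWithin_Iio_self_neBot' ⟨a, hab⟩
    obtain ⟨y, hyt, hy1, hy2⟩ := Filter.nonempty_of_mem (Filter.inter_mem ht hIoo_mem)
    have hytop : y ≠ ⊤ := (lt_of_lt_of_le hy2 le_top).ne
    have hybot : y ≠ ⊥ := by
      intro h; rw [h] at hy1
      exact absurd (le_max_right a (↑x₀ : EReal)) (not_le.mpr (lt_of_le_of_lt (le_of_lt hy1) (EReal.bot_lt_coe x₀)))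
    exact ⟨y.toReal, by rwa [EReal.coe_toReal hytop hybot]⟩
  have hmem : ∀ᶠ x in fromLeft b, x ∈ S ∧ x₀ < x := by
    refine Filter.mem_of_superset (Filter.preimage_mem_comap hIoo_mem) ?_
    rintro x ⟨hx1, hx2⟩
    refine ⟨⟨lt_of_le_of_lt (le_max_left _ _) hx1, hx2⟩, ?_⟩
    have : (↑x₀ : EReal) < ↑x := lt_of_le_of_lt (le_max_right _ _) hx1
    exact_mod_cast this
  obtain ⟨x₁, hfx₁, hx₁S, hx₀x₁⟩ := ((hfb.eventually_ge_atTop 1).and hmem).exists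
  have hgx₀ : g x₀ < 0 := mul_neg_of_neg_of_pos hfx₀ (Real.exp_pos _)
  have hgx₁ : 0 < g x₁ := mul_pos (lt_of_lt_of_le one_pos hfx₁) (Real.exp_pos _)
  rcases lt_trichotomy (2 * α + 1) 0 with hc | hc | hc
  · -- g strictly decreasing: contradiction
    exfalso
    have hanti : StrictAntiOn g S := strictAntiOn_of_deriv_neg hSconv hcontg
      (fun x hx => by
        rw [hSopen.interior_eq] at hx
        rw [(hgderiv x hx).deriv]
        exact mul_neg_of_neg_of_pos hc (Real.exp_pos _))
    have := hanti hx₀ hx₁S hx₀x₁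
    linarith
  · exact absurd (by linarith : α = -1/2) hα
  · -- g strictly increasing
    have hmono : StrictMonoOn g S := strictMonoOn_of_deriv_pos hSconv hcontg
      (fun x hx => by
        rw [hSopen.interior_eq] at hx
        rw [(hgderiv x hx).deriv]
        exact mul_pos hc (Real.exp_pos _))
    have hIcc : Icc x₀ x₁ ⊆ S := hSord.out hx₀ hx₁S
    have hsub := intermediate_value_Ioo (le_of_lt hx₀x₁) (hcontg.mono hIcc)
    obtain ⟨z, hzIoo, hgz⟩ := hsub ⟨hgx₀, hgx₁⟩
    have hzS : z ∈ S := hIcc (Ioo_subset_Icc_self hzIoo)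
    have hfz : f z = 0 := by
      rcases mul_eq_zero.mp hgz with h | h
      · exact h
      · exact absurd h (Real.exp_ne_zero _)
    refine ⟨z, hzS, hfz, hzIoo.1, ?_, ?_⟩
    · have := hfderiv z hzS
      rwa [hfz, mul_zero, zero_add] at this
    · intro w hwS hfw
      have hgw : g w = 0 := by rw [hg]; simp only [hfw, zero_mul]
      exact hmono.injOn hwS hzS (by rw [hgw, hgz])
end

section
/- Let α ∈ (−1/2, 1/2) and let u : ℝ → ℝ be twice differentiable, satisfy u''(x) = 2u(x)³ + x·u(x) − α on all of ℝ, and suppose f(x) := 2u(x)² − 2u'(x) + x satisfies f(x) → +∞ as x → +∞ and f(x) → −∞ as x → −∞ (as holds for the Ablowitz–Segur solutions, whose asymptotics give f(x) ~ x as x → ±∞). Then there is exactly one x₁ ∈ ℝ with f(x₁) = 0, and f'(x₁) = 2α + 1. Consequently the Bäcklund transform v(x) := −u(x) + (2α+1)/f(x) is defined and continuous on ℝ ∖ {x₁}, and it blows up at x₁ as a simple pole with residue +1: (x − x₁)·v(x) → 1 as x → x₁. That is, the quasi-Ablowitz–Segur solution with parameter α + 1 ∈ (1/2, 3/2) has exactly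 one real pole, with residue +1. -/
open Filter Topology Set

/-- Proposition 3.1: let `α ∈ (-1/2, 1/2)` and let `u` be a
globally smooth real solution of Painlevé II with parameter `α` such that
`f = 2 u^2 - 2 u' + x` tends to `+∞` at `+∞` and to `-∞` at `-∞` (as for
the Ablowitz–Segur solutions).  Then `f` has exactly one real zero `x₁`,
`f'(x₁) = 2α + 1`, and the Bäcklund transform `v = -u + (2α+1)/f` (the
quasi-Ablowitz–Segur solution with parameter `α + 1`) is continuous off
`x₁` and has a simple pole of residue `+1` at `x₁`. -/
theorem qAS_one_pole (α : ℝ) (hα : α ∈ Set.Ioo (-(1:ℝ)/2) (1/2))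
    (u u' u'' : ℝ → ℝ)
    (hu : ∀ x, HasDerivAt u (u' x) x)
    (hu' : ∀ x, HasDerivAt u' (u'' x) x)
    (hPII : ∀ x, u'' x = 2 * (u x) ^ 3 + x * u x - α)
    (hftop : Tendsto (piiF u u') atTop atTop)
    (hfbot : Tendsto (piiF u u') atBot atBot) :
    ∃ x₁ : ℝ, piiF u u' x₁ = 0 ∧ (∀ y, piiF u u' y = 0 → y = x₁) ∧
      HasDerivAt (piiF u u') (2 * α + 1) x₁ ∧
      ContinuousOn (backlund α u u') {x | x ≠ x₁} ∧
      Tendsto (fun x => (x - x₁) * backlund α u u' x) (𝓝[≠] x₁) (𝓝 1) := by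
  obtain ⟨hα1, hα2⟩ := hα
  set f := piiF u u' with hfdef
  have hpos : (0:ℝ) < 2 * α + 1 := by linarith
  -- derivative of f
  have hf' : ∀ x, HasDerivAt f (-2 * u x * f x + (2 * α + 1)) x := by
    intro x
    have h1 : HasDerivAt f (2 * (2 * u x ^ 1 * u' x) - 2 * u'' x + 1) x := by
      exact ((((hu x).pow 2).const_mul 2).sub ((hu' x).const_mul 2)).add (hasDerivAt_id x)
    convert h1 using 1
    simp only [hfdef, piiF, hPII x]
    ring
  have hcont : Continuous f := by
    rw [continuous_iff_continuousAt]
    exact fun x => (hf' x).continuousAt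
  -- derivative at zeros
  have hderiv : ∀ c, f c = 0 → HasDerivAt f (2 * α + 1) c := by
    intro c hc
    have := hf' c
    rw [hc] at this
    simpa using this
  -- slope positivity near zeros
  have hslope : ∀ c, f c = 0 →
      Tendsto (slope f c) (𝓝[≠] c) (𝓝 (2 * α + 1)) := by
    intro c hc
    exact hasDerivAt_iff_tendsto_slope.mp (hderiv c hc)
  have hposslope : ∀ c, f c = 0 → ∀ᶠ x in 𝓝[≠] c, 0 < slope f c x := by
    intro c hc
    exact (hslope c hc).eventually (eventually_gt_nhds hpos)
  -- near a zero c: f < 0 just left, f > 0 just right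
  have hleft : ∀ c, f c = 0 → ∀ᶠ x in 𝓝[<] c, f x < 0 := by
    intro c hc
    have h := (hposslope c hc).filter_mono (nhdsWithin_mono c fun x hx => ne_of_lt hx)
    filter_upwards [h, self_mem_nhdsWithin] with x hx hx'
    have : slope f c x = f x / (x - c) := by simp [slope_def_field, hc]
    rw [this] at hx
    rcases div_pos_iff.mp hx with ⟨h1, h2⟩ | ⟨h1, h2⟩
    · simp only [mem_Iio] at hx'; linarith
    · exact h1
  have hright : ∀ c, f c = 0 → ∀ᶠ x in 𝓝[>] c, 0 < f x := by
    intro c hc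
    have h := (hposslope c hc).filter_mono (nhdsWithin_mono c fun x hx => ne_of_gt hx)
    filter_upwards [h, self_mem_nhdsWithin] with x hx hx'
    have : slope f c x = f x / (x - c) := by simp [slope_def_field, hc]
    rw [this] at hx
    rcases div_pos_iff.mp hx with ⟨h1, h2⟩ | ⟨h1, h2⟩
    · exact h1
    · simp only [mem_Ioi] at hx'; linarith
  -- no two distinct zeros
  have huniq2 : ∀ a b, a < b → f a = 0 → f b = 0 → False := by
    intro a b hab ha hb
    -- pick q ∈ (a,b) with f q < 0
    have hq : ∃ q, a < q ∧ q < b ∧ f q < 0 := by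
      have h1 : ∀ᶠ x in 𝓝[<] b, a < x := by
        refine eventually_nhdsWithin_of_eventually_nhds ?_
        exact eventually_gt_nhds hab
      obtain ⟨q, hq1, hq2, hq3⟩ := ((hleft b hb).and (h1.and self_mem_nhdsWithin)).exists
      exact ⟨q, hq2, hq3, hq1⟩
    obtain ⟨q, haq, hqb, hfq⟩ := hq
    -- S = zeros of f in [a,q]
    set S : Set ℝ := {x | x ∈ Icc a q ∧ f x = 0} with hS
    have hSne : S.Nonempty := ⟨a, ⟨le_refl a, le_of_lt haq⟩, ha⟩
    have hScomp : IsCompact S := by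
      have : IsClosed S := (isClosed_Icc.inter (isClosed_eq hcont continuous_const) : _)
      exact (isCompact_Icc.inter_right (isClosed_eq hcont continuous_const)).of_isClosed_subset this
        (fun x hx => hx)
    have hc_mem := hScomp.sSup_mem hSne
    set c := sSup S with hcdef
    obtain ⟨⟨hac, hcq⟩, hfc⟩ := hc_mem
    have hcq' : c < q := lt_of_le_of_ne hcq (by intro h; rw [h] at hfc; exact absurd hfc (ne_of_lt hfq))
    -- pick p ∈ (c,q) with f p > 0
    have hp : ∃ p, c < p ∧ p < q ∧ 0 < f p := by
      have h1 : ∀ᶠ x in 𝓝[>] c, x < q := by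
        refine eventually_nhdsWithin_of_eventually_nhds ?_
        exact eventually_lt_nhds hcq'
      obtain ⟨p, hp1, hp2, hp3⟩ := ((hright c hfc).and (h1.and self_mem_nhdsWithin)).exists
      exact ⟨p, hp3, hp2, hp1⟩
    obtain ⟨p, hcp, hpq, hfp⟩ := hp
    -- IVT on [p,q]: f p > 0 > f q gives zero z in (c, q]
    have hz : ∃ z ∈ Icc p q, f z = 0 := by
      have : (0:ℝ) ∈ Icc (f q) (f p) := ⟨le_of_lt hfq, le_of_lt hfp⟩
      obtain ⟨z, hz1, hz2⟩ := intermediate_value_Icc' (le_of_lt hpq) hcont.continuousOn this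
      exact ⟨z, hz1, hz2⟩
    obtain ⟨z, ⟨hpz, hzq⟩, hfz⟩ := hz
    have hzS : z ∈ S := ⟨⟨le_trans hac (le_trans (le_of_lt hcp) hpz), hzq⟩, hfz⟩
    have : z ≤ c := le_csSup hScomp.bddAbove hzS
    linarith
  -- existence of a zero
  have hex : ∃ x₁, f x₁ = 0 := by
    obtain ⟨a, hfa⟩ := (hfbot.eventually (eventually_lt_atBot (0:ℝ))).exists
    obtain ⟨b, hfb⟩ := (hftop.eventually (eventually_gt_atTop (0:ℝ))).exists
    have h0 : (0:ℝ) ∈ Icc (f a) (f b) := ⟨le_of_lt hfa, le_of_lt hfb⟩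
    obtain ⟨x₁, hx₁⟩ := intermediate_value_univ a b hcont h0
    exact ⟨x₁, hx₁⟩
  obtain ⟨x₁, hx₁⟩ := hex
  have huniq : ∀ y, f y = 0 → y = x₁ := by
    intro y hy
    by_contra hne
    rcases lt_or_gt_of_ne hne with h | h
    · exact huniq2 y x₁ h hy hx₁
    · exact huniq2 x₁ y h hx₁ hy
  have hfne : ∀ x, x ≠ x₁ → f x ≠ 0 := fun x hx h => hx (huniq x h)
  refine ⟨x₁, hx₁, huniq, hderiv x₁ hx₁, ?_, ?_⟩
  · -- continuity of backlund off x₁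
    have hcu : Continuous u := by
      rw [continuous_iff_continuousAt]; exact fun x => (hu x).continuousAt
    have : ContinuousOn (fun x => (2 * α + 1) / f x) {x | x ≠ x₁} :=
      continuousOn_const.div hcont.continuousOn (fun x hx => hfne x hx)
    exact (hcu.neg.continuousOn.add this : _)
  · -- the limit
    have hsl := hslope x₁ hx₁
    have hinv : Tendsto (fun x => (slope f x₁ x)⁻¹) (𝓝[≠] x₁) (𝓝 ((2 * α + 1)⁻¹)) :=
      hsl.inv₀ (ne_of_gt hpos)
    have h2 : Tendsto (fun x => (2 * α + 1) * (slope f x₁ x)⁻¹) (𝓝[≠] x₁)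
        (𝓝 ((2 * α + 1) * (2 * α + 1)⁻¹)) := hinv.const_mul _
    rw [mul_inv_cancel₀ (ne_of_gt hpos)] at h2
    have h3 : Tendsto (fun x => (x - x₁) * (-u x)) (𝓝[≠] x₁) (𝓝 0) := by
      have hcu : Continuous u := by
        rw [continuous_iff_continuousAt]; exact fun x => (hu x).continuousAt
      have : Tendsto (fun x => (x - x₁) * (-u x)) (𝓝 x₁) (𝓝 ((x₁ - x₁) * (-u x₁))) :=
        ((continuous_id.sub continuous_const).mul hcu.neg).tendsto x₁
      simpa using this.mono_left nhdsWithin_le_nhds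
    have hsum := h3.add h2
    rw [zero_add] at hsum
    refine Filter.Tendsto.congr' ?_ hsum
    filter_upwards [self_mem_nhdsWithin] with x hx
    have hsv : slope f x₁ x = f x / (x - x₁) := by simp [slope_def_field, hx₁]
    rw [hsv, inv_div]
    simp only [backlund, ← hfdef]
    ring
end

section
/- Let α ∈ (1/2, 3/2), p ∈ ℝ, and let u be twice differentiable on ℝ ∖ {p} and satisfy u''(x) = 2u(x)³ + x·u(x) − α there, with a simple pole at p of residue +1, i.e. (x − p)·u(x) → 1 as x → p. Suppose f(x) := 2u(x)² − 2u'(x) + x satisfies: f(x) → −∞ as x → −∞, f(x) → +∞ as x → +∞, and f(x) → +∞ as x → p (from both sides, as follows from the Laurent expansion of u at its residue-+1 pole). Then f has exactly one zero z in ℝ ∖ {p}, and z < p. Consequently the Bäcklund transform v(x) := −u(x) + (2α+1)/f(x) blows up precisely at the two points z < p, with (x − z)·v(x) → 1 as x → z and (x − p)·v(x) → −1 as x → p; that is, the quasi-Ablowitz–Segur solution with parameter α + 1 ∈ (3/2, 5/2) has exactly two real poles, with residues +1 and −1 in increasing order of location. -/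
open Filter Topology Set

/-- The Riccati-type derivative identity `f' = -2 u f + (2α+1)` for the
auxiliary function of the Bäcklund transformation. -/
lemma piiF_hasDerivAt (α p : ℝ) (u u' u'' : ℝ → ℝ)
    (hu : ∀ x ≠ p, HasDerivAt u (u' x) x)
    (hu' : ∀ x ≠ p, HasDerivAt u' (u'' x) x)
    (hPII : ∀ x ≠ p, u'' x = 2 * (u x) ^ 3 + x * u x - α)
    {x : ℝ} (hx : x ≠ p) :
    HasDerivAt (piiF u u') (-2 * u x * piiF u u' x + (2 * α + 1)) x := by
  have h1 := hu x hx
  have h2 := hu' x hx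
  have h : HasDerivAt (piiF u u')
      (2 * (2 * u x ^ 1 * u' x) - 2 * u'' x + 1) x := by
    have := (((h1.pow 2).const_mul 2).sub (h2.const_mul 2)).add (hasDerivAt_id x)
    refine (this.congr_deriv (by norm_num)).congr_of_eventuallyEq (Eventually.of_forall fun y => ?_)
    simp [piiF]
  convert h using 1
  rw [hPII x hx]
  simp only [piiF]
  ring

/-- If `f` is positive at `a` and vanishes at some `b > a`, with `[a,b]`
avoiding the pole `p`, we get a contradiction: at the first zero after `a`
the derivative must be `≤ 0`, but the Riccati identity forces it to be
`2α+1 > 0`. -/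
lemma piiF_no_zero_after_pos (α p : ℝ) (hα : (1:ℝ)/2 < α) (u u' u'' : ℝ → ℝ)
    (hu : ∀ x ≠ p, HasDerivAt u (u' x) x)
    (hu' : ∀ x ≠ p, HasDerivAt u' (u'' x) x)
    (hPII : ∀ x ≠ p, u'' x = 2 * (u x) ^ 3 + x * u x - α)
    {a b : ℝ} (hab : a < b) (hp : ∀ x ∈ Icc a b, x ≠ p)
    (ha : 0 < piiF u u' a) (hb : piiF u u' b = 0) : False := by
  set f := piiF u u' with hf
  have hcont : ContinuousOn f (Icc a b) := fun x hx =>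
    (piiF_hasDerivAt α p u u' u'' hu hu' hPII (hp x hx)).continuousAt.continuousWithinAt
  set S : Set ℝ := Icc a b ∩ f ⁻¹' {0} with hS
  have hSc : IsClosed S := hcont.preimage_isClosed_of_isClosed isClosed_Icc isClosed_singleton
  have hSne : S.Nonempty := ⟨b, ⟨le_of_lt hab, le_refl b⟩, hb⟩
  have hSbdd : BddBelow S := ⟨a, fun x hx => hx.1.1⟩
  set c := sInf S with hc
  have hcS : c ∈ S := hSc.csInf_mem hSne hSbdd
  have hca : a ≤ c := hcS.1.1
  have hcb : c ≤ b := hcS.1.2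
  have hfc : f c = 0 := hcS.2
  have hac : a < c := by
    rcases eq_or_lt_of_le hca with h | h
    · exfalso; rw [← h] at hfc; linarith
    · exact h
  -- f is positive on [a, c)
  have hpos : ∀ x ∈ Ico a c, 0 < f x := by
    intro x hx
    by_contra hle
    push_neg at hle
    rcases eq_or_lt_of_le hle with h | h
    · exact absurd (csInf_le hSbdd ⟨⟨hx.1, le_of_lt (lt_of_lt_of_le hx.2 hcb)⟩, h⟩)
        (not_le.mpr hx.2)
    · -- f x < 0 < f a : a zero in [a, x], below c, contradiction
      have hax : a < x := by
        rcases eq_or_lt_of_le hx.1 with h' | h'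
        · exfalso; rw [← h'] at h; linarith
        · exact h'
      have hsub : Icc a x ⊆ Icc a b :=
        Icc_subset_Icc le_rfl (le_trans (le_of_lt hx.2) hcb)
      have := intermediate_value_Icc' (le_of_lt hax) (hcont.mono hsub)
      have h0 : (0:ℝ) ∈ Icc (f x) (f a) := ⟨le_of_lt h, le_of_lt ha⟩
      obtain ⟨y, hy, hfy⟩ := this h0
      have : c ≤ y := csInf_le hSbdd ⟨hsub hy, hfy⟩
      have : y < c := lt_of_le_of_lt hy.2 hx.2
      linarith
  -- derivative at c is 2α+1 > 0
  have hcp : c ≠ p := hp c ⟨hca, hcb⟩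
  have hd : HasDerivAt f (2 * α + 1) c := by
    have := piiF_hasDerivAt α p u u' u'' hu hu' hPII hcp
    rw [← hf, hfc] at this
    simpa using this
  have hslope : Tendsto (slope f c) (𝓝[<] c) (𝓝 (2 * α + 1)) :=
    (hasDerivAt_iff_tendsto_slope.mp hd).mono_left
      (nhdsWithin_mono c fun x hx => ne_of_lt hx)
  have hev : ∀ᶠ x in 𝓝[<] c, slope f c x ≤ 0 := by
    filter_upwards [Ioo_mem_nhdsLT hac] with x hx
    have hfx : 0 < f x := hpos x ⟨le_of_lt hx.1, hx.2⟩
    have : slope f c x = f x / (x - c) := by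
      rw [slope_def_field, hfc]; ring_nf
    rw [this]
    exact le_of_lt (div_neg_of_pos_of_neg hfx (by linarith [hx.2]))
  have := le_of_tendsto hslope hev
  linarith

/-- Proposition 3.2: let `α ∈ (1/2, 3/2)` and let `u` solve
Painlevé II with parameter `α` on `ℝ ∖ {p}` with a simple pole of residue
`+1` at `p`.  If `f = 2 u^2 - 2 u' + x` tends to `-∞` at `-∞`, to `+∞` at
`+∞`, and to `+∞` at `p`, then `f` has exactly one zero `z` in `ℝ ∖ {p}`,
with `z < p`, and the Bäcklund transform `v = -u + (2α+1)/f` (the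
quasi-Ablowitz–Segur solution with parameter `α + 1`) blows up precisely at
the two points `z < p`, with residues `+1` at `z` and `-1` at `p`. -/
theorem qAS_two_poles (α : ℝ) (hα : α ∈ Set.Ioo ((1:ℝ)/2) (3/2)) (p : ℝ)
    (u u' u'' : ℝ → ℝ)
    (hu : ∀ x ≠ p, HasDerivAt u (u' x) x)
    (hu' : ∀ x ≠ p, HasDerivAt u' (u'' x) x)
    (hPII : ∀ x ≠ p, u'' x = 2 * (u x) ^ 3 + x * u x - α)
    (hpole : Tendsto (fun x => (x - p) * u x) (𝓝[≠] p) (𝓝 1))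
    (hfbot : Tendsto (piiF u u') atBot atBot)
    (hftop : Tendsto (piiF u u') atTop atTop)
    (hfp : Tendsto (piiF u u') (𝓝[≠] p) atTop) :
    ∃ z : ℝ, z < p ∧ piiF u u' z = 0 ∧
      (∀ w, w ≠ p → piiF u u' w = 0 → w = z) ∧
      ContinuousOn (backlund α u u') {x | x ≠ z ∧ x ≠ p} ∧
      Tendsto (fun x => (x - z) * backlund α u u' x) (𝓝[≠] z) (𝓝 1) ∧
      Tendsto (fun x => (x - p) * backlund α u u' x) (𝓝[≠] p) (𝓝 (-1)) := by
  obtain ⟨hα1, hα2⟩ := hα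
  set f := piiF u u' with hf
  have hpos : (0:ℝ) < 2 * α + 1 := by linarith
  -- derivative lemma specialized
  have hderiv : ∀ x ≠ p, HasDerivAt f (-2 * u x * f x + (2 * α + 1)) x := fun x hx =>
    piiF_hasDerivAt α p u u' u'' hu hu' hPII hx
  have hfcont : ∀ x ≠ p, ContinuousAt f x := fun x hx => (hderiv x hx).continuousAt
  -- find a point a < p with f a < 0
  have h1 : ∀ᶠ x in atBot, f x < 0 ∧ x < p := by
    filter_upwards [hfbot.eventually (eventually_lt_atBot 0), eventually_lt_atBot p]
      with x h h'
    exact ⟨h, h'⟩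
  obtain ⟨a, hfa, hap⟩ := h1.exists
  -- find b ∈ (a, p) with f b > 0
  have hfpl : Tendsto f (𝓝[<] p) atTop :=
    hfp.mono_left (nhdsWithin_mono p fun x hx => ne_of_lt hx)
  have h2 : ∀ᶠ x in 𝓝[<] p, 0 < f x ∧ a < x ∧ x < p := by
    filter_upwards [hfpl.eventually (eventually_gt_atTop 0),
      Ioo_mem_nhdsLT hap] with x h h'
    exact ⟨h, h'.1, h'.2⟩
  obtain ⟨b, hfb, hab, hbp⟩ := h2.exists
  -- intermediate value: zero z in [a, b]
  have hcont_ab : ContinuousOn f (Icc a b) := fun x hx =>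
    (hfcont x (ne_of_lt (lt_of_le_of_lt hx.2 hbp))).continuousWithinAt
  obtain ⟨z, hz, hfz⟩ := intermediate_value_Icc (le_of_lt hab) hcont_ab
    (⟨le_of_lt hfa, le_of_lt hfb⟩ : (0:ℝ) ∈ Icc (f a) (f b))
  have hzp : z < p := lt_of_le_of_lt hz.2 hbp
  -- no zero to the right of p
  have hnoright : ∀ w, p < w → f w ≠ 0 := by
    intro w hpw hfw
    have h3 : ∀ᶠ x in 𝓝[>] p, 0 < f x ∧ p < x ∧ x < w := by
      have hfpr : Tendsto f (𝓝[>] p) atTop :=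
        hfp.mono_left (nhdsWithin_mono p fun x hx => ne_of_gt hx)
      filter_upwards [hfpr.eventually (eventually_gt_atTop 0),
        Ioo_mem_nhdsGT hpw] with x h h'
      exact ⟨h, h'.1, h'.2⟩
    obtain ⟨x₀, hfx₀, hpx₀, hx₀w⟩ := h3.exists
    exact piiF_no_zero_after_pos α p hα1 u u' u'' hu hu' hPII hx₀w
      (fun x hx => ne_of_gt (lt_of_lt_of_le hpx₀ hx.1)) hfx₀ hfw
  -- no two zeros to the left of p
  have hnotwo : ∀ w₁ w₂, w₁ < w₂ → w₂ < p → f w₁ = 0 → f w₂ = 0 → False := by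
    intro w₁ w₂ h12 h2p hfw1 hfw2
    -- f > 0 just right of w₁
    have hd : HasDerivAt f (2 * α + 1) w₁ := by
      have := hderiv w₁ (ne_of_lt (lt_trans h12 h2p))
      rw [hfw1] at this; simpa using this
    have hslope : Tendsto (slope f w₁) (𝓝[>] w₁) (𝓝 (2 * α + 1)) :=
      (hasDerivAt_iff_tendsto_slope.mp hd).mono_left
        (nhdsWithin_mono w₁ fun x hx => ne_of_gt hx)
    have h4 : ∀ᶠ x in 𝓝[>] w₁, 0 < f x ∧ x < w₂ := by
      filter_upwards [hslope.eventually (eventually_gt_nhds hpos),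
        Ioo_mem_nhdsGT h12, self_mem_nhdsWithin] with x h h' hx
      have hxw : w₁ < x := hx
      have : slope f w₁ x = f x / (x - w₁) := by
        rw [slope_def_field, hfw1]; ring_nf
      rw [this] at h
      refine ⟨?_, h'.2⟩
      by_contra hle
      push_neg at hle
      have : f x / (x - w₁) ≤ 0 := div_nonpos_of_nonpos_of_nonneg hle (by linarith)
      linarith
    obtain ⟨x₀, hfx₀, hx₀2⟩ := h4.exists
    exact piiF_no_zero_after_pos α p hα1 u u' u'' hu hu' hPII hx₀2
      (fun x hx => ne_of_lt (lt_of_le_of_lt hx.2 h2p)) hfx₀ hfw2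
  -- uniqueness
  have huniq : ∀ w, w ≠ p → f w = 0 → w = z := by
    intro w hwp hfw
    have hwlt : w < p := by
      rcases lt_trichotomy w p with h | h | h
      · exact h
      · exact absurd h hwp
      · exact absurd hfw (hnoright w h)
    rcases lt_trichotomy w z with h | h | h
    · exact absurd (hnotwo w z h hzp hfw hfz) not_false
    · exact h
    · exact absurd (hnotwo z w h hwlt hfz hfw) not_false
  -- nonvanishing of f off {z, p}
  have hfne : ∀ x, x ≠ z → x ≠ p → f x ≠ 0 := fun x hxz hxp h =>
    hxz (huniq x hxp h)
  refine ⟨z, hzp, hfz, huniq, ?_, ?_, ?_⟩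
  · -- continuity of the Bäcklund transform
    intro x hx
    obtain ⟨hxz, hxp⟩ := hx
    have hcu : ContinuousAt u x := (hu x hxp).continuousAt
    have hcf : ContinuousAt f x := hfcont x hxp
    exact ((hcu.neg).add (continuousAt_const.div hcf (hfne x hxz hxp))).continuousWithinAt
  · -- residue 1 at z
    have hzp' : z ≠ p := ne_of_lt hzp
    have hd : HasDerivAt f (2 * α + 1) z := by
      have := hderiv z hzp'
      rw [hfz] at this; simpa using this
    have hslope : Tendsto (slope f z) (𝓝[≠] z) (𝓝 (2 * α + 1)) :=
      hasDerivAt_iff_tendsto_slope.mp hd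
    have hinv : Tendsto (fun x => (x - z) / f x) (𝓝[≠] z) (𝓝 (2 * α + 1)⁻¹) := by
      have := hslope.inv₀ (ne_of_gt hpos)
      refine this.congr fun x => ?_
      rw [slope_def_field, hfz, sub_zero, inv_div]
    have h0 : Tendsto (fun x => (x - z) * (-u x)) (𝓝[≠] z) (𝓝 0) := by
      have hxz : Tendsto (fun x : ℝ => x - z) (𝓝[≠] z) (𝓝 0) := by
        have : Tendsto (fun x : ℝ => x - z) (𝓝 z) (𝓝 (z - z)) :=
          (continuous_id.sub continuous_const).tendsto z
        simpa using this.mono_left nhdsWithin_le_nhds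
      have hcu : Tendsto (fun x => -u x) (𝓝[≠] z) (𝓝 (-u z)) :=
        ((hu z hzp').continuousAt.neg).continuousWithinAt
      simpa using hxz.mul hcu
    have htot : Tendsto (fun x => (x - z) * (-u x) + (2 * α + 1) * ((x - z) / f x))
        (𝓝[≠] z) (𝓝 (0 + (2 * α + 1) * (2 * α + 1)⁻¹)) :=
      h0.add (hinv.const_mul _)
    have heq : (fun x => (x - z) * backlund α u u' x)
        = fun x => (x - z) * (-u x) + (2 * α + 1) * ((x - z) / f x) := by
      funext x
      simp only [backlund, ← hf]
      ring
    rw [heq]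
    convert htot using 2
    rw [mul_inv_cancel₀ (ne_of_gt hpos)]
    ring
  · -- residue -1 at p
    have h0 : Tendsto (fun x => (2 * α + 1) * ((x - p) * (f x)⁻¹)) (𝓝[≠] p) (𝓝 0) := by
      have hxp : Tendsto (fun x : ℝ => x - p) (𝓝[≠] p) (𝓝 0) := by
        have : Tendsto (fun x : ℝ => x - p) (𝓝 p) (𝓝 (p - p)) :=
          (continuous_id.sub continuous_const).tendsto p
        simpa using this.mono_left nhdsWithin_le_nhds
      have hinv : Tendsto (fun x => (f x)⁻¹) (𝓝[≠] p) (𝓝 0) := hfp.inv_tendsto_atTop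
      have := (hxp.mul hinv).const_mul (2 * α + 1)
      simpa using this
    have htot : Tendsto (fun x => -((x - p) * u x) + (2 * α + 1) * ((x - p) * (f x)⁻¹))
        (𝓝[≠] p) (𝓝 (-1 + 0)) := hpole.neg.add h0
    have heq : (fun x => (x - p) * backlund α u u' x)
        = fun x => -((x - p) * u x) + (2 * α + 1) * ((x - p) * (f x)⁻¹) := by
      funext x
      simp only [backlund, ← hf, div_eq_mul_inv]
      ring
    rw [heq]
    simpa using htot
end

section
/- Let α ∈ (−1/2, 1/2) and let u : ℝ → ℝ be twice differentiable, satisfy u''(x) = 2u(x)³ + x·u(x) − α on all of ℝ, and suppose f(x) := 2u(x)² − 2u'(x) + x satisfies f(x) → +∞ as x → +∞ and f(x) < 0 for all sufficiently negative x (as holds for the Hastings–McLeod-type solutions with u(x) ~ −√(−x/2) as x → −∞, for which f(x) → ((−2α−1)/2)·(−x/2)^{−1/2} < 0). Then there is exactly one x₁ ∈ ℝ with f(x₁) = 0, and f'(x₁) = 2α + 1. Consequently the Bäcklund transform v(x) := −u(x) + (2α+1)/f(x) is defined and continuous on ℝ ∖ {x₁} and blows up at x₁ with (x − x₁)·v(x)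 → 1 as x → x₁; that is, the quasi-Hastings–McLeod solution with parameter α + 1 ∈ (1/2, 3/2) has exactly one real pole, with residue +1. -/
open Filter Topology Set

/-- Proposition 3.4: let `α ∈ (-1/2, 1/2)` and let `u` be a
globally smooth real solution of Painlevé II with parameter `α` such that
`f = 2 u^2 - 2 u' + x` tends to `+∞` at `+∞` and is negative for all
sufficiently negative `x` (as for the Hastings–McLeod-type solutions with
`u(x) ~ -√(-x/2)` as `x → -∞`).  Then `f` has exactly one real zero `x₁`,
`f'(x₁) = 2α + 1`, and the Bäcklund transform `v = -u + (2α+1)/f` (the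
quasi-Hastings–McLeod solution with parameter `α + 1`) is continuous off
`x₁` and has a simple pole of residue `+1` at `x₁`. -/
theorem qHM_one_pole (α : ℝ) (hα : α ∈ Set.Ioo (-(1:ℝ)/2) (1/2))
    (u u' u'' : ℝ → ℝ)
    (hu : ∀ x, HasDerivAt u (u' x) x)
    (hu' : ∀ x, HasDerivAt u' (u'' x) x)
    (hPII : ∀ x, u'' x = 2 * (u x) ^ 3 + x * u x - α)
    (hftop : Tendsto (piiF u u') atTop atTop)
    (hfneg : ∀ᶠ x in atBot, piiF u u' x < 0) :
    ∃ x₁ : ℝ, piiF u u' x₁ = 0 ∧ (∀ y, piiF u u' y = 0 → y = x₁) ∧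
      HasDerivAt (piiF u u') (2 * α + 1) x₁ ∧
      ContinuousOn (backlund α u u') {x | x ≠ x₁} ∧
      Tendsto (fun x => (x - x₁) * backlund α u u' x) (𝓝[≠] x₁) (𝓝 1) := by
  obtain ⟨hα1, hα2⟩ := hα
  have hpos : (0:ℝ) < 2 * α + 1 := by linarith
  set f := piiF u u' with hf_def
  have hucont : Continuous u := continuous_iff_continuousAt.2 fun x => (hu x).continuousAt
  -- the derivative of f
  have hfd : ∀ x, HasDerivAt f (-2 * u x * f x + (2 * α + 1)) x := by
    intro x
    have h1 : HasDerivAt f (2 * (2 * u x ^ 1 * u' x) - 2 * u'' x + 1) x := by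
      have h := ((((hu x).pow 2).const_mul 2).sub ((hu' x).const_mul 2)).add (hasDerivAt_id x)
      exact h
    convert h1 using 1
    simp only [hf_def, piiF]
    rw [hPII x]; ring
  have hfc : Continuous f := continuous_iff_continuousAt.2 fun x => (hfd x).continuousAt
  -- integrating factor
  set U : ℝ → ℝ := fun y => ∫ t in (0:ℝ)..y, u t with hU_def
  have hUd : ∀ x, HasDerivAt U (u x) x := fun x =>
    intervalIntegral.integral_hasDerivAt_right (hucont.intervalIntegrable 0 x)
      (hucont.stronglyMeasurableAtFilter _ _) hucont.continuousAt
  set g : ℝ → ℝ := fun x => f x * Real.exp (2 * U x) with hg_def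
  have hgd : ∀ x, HasDerivAt g ((2 * α + 1) * Real.exp (2 * U x)) x := by
    intro x
    have hE : HasDerivAt (fun y => Real.exp (2 * U y)) (Real.exp (2 * U x) * (2 * u x)) x :=
      ((hUd x).const_mul 2).exp
    have h := (hfd x).mul hE
    exact h.congr_deriv (by ring)
  have hgmono : StrictMono g :=
    strictMono_of_hasDerivAt_pos hgd fun x => mul_pos hpos (Real.exp_pos _)
  -- existence of a zero
  obtain ⟨a, ha⟩ := hfneg.exists
  obtain ⟨b, hb1, hb2⟩ := ((hftop.eventually_ge_atTop 1).and (eventually_ge_atTop a)).exists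
  have hab : a ≤ b := hb2
  have h0mem : (0:ℝ) ∈ Icc (f a) (f b) := ⟨le_of_lt ha, by linarith⟩
  obtain ⟨x₁, -, hzero⟩ := intermediate_value_Icc hab hfc.continuousOn h0mem
  -- uniqueness
  have huniq : ∀ y, f y = 0 → y = x₁ := by
    intro y hy
    have : g y = g x₁ := by simp only [hg_def, hy, hzero, zero_mul]
    exact hgmono.injective this
  -- derivative at the zero
  have hd1 : HasDerivAt f (2 * α + 1) x₁ := by
    have := hfd x₁
    rwa [hzero, mul_zero, zero_add] at this
  -- nonvanishing off x₁
  have hne : ∀ x, x ≠ x₁ → f x ≠ 0 := fun x hx h0 => hx (huniq x h0)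
  -- continuity of the Bäcklund transform off x₁
  have hcontOn : ContinuousOn (backlund α u u') {x | x ≠ x₁} := by
    apply ContinuousOn.add
    · exact hucont.neg.continuousOn
    · exact continuousOn_const.div hfc.continuousOn fun x hx => hne x hx
  -- slope limit
  have hslope : Tendsto (fun x => f x / (x - x₁)) (𝓝[≠] x₁) (𝓝 (2 * α + 1)) := by
    have h := hasDerivAt_iff_tendsto_slope.mp hd1
    refine h.congr fun x => ?_
    simp [slope_def_field, hzero]
  have hinv : Tendsto (fun x => (x - x₁) / f x) (𝓝[≠] x₁) (𝓝 (2 * α + 1)⁻¹) := by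
    have h := hslope.inv₀ (ne_of_gt hpos)
    simpa [inv_div] using h
  have hx0 : Tendsto (fun x : ℝ => x - x₁) (𝓝[≠] x₁) (𝓝 0) := by
    have h : Tendsto (fun x : ℝ => x - x₁) (𝓝 x₁) (𝓝 (x₁ - x₁)) :=
      (continuous_id.sub continuous_const).tendsto x₁
    rw [sub_self] at h
    exact h.mono_left nhdsWithin_le_nhds
  have h1 : Tendsto (fun x => (x - x₁) * (-u x)) (𝓝[≠] x₁) (𝓝 0) := by
    have hu0 : Tendsto (fun x => -u x) (𝓝[≠] x₁) (𝓝 (-u x₁)) :=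
      (hucont.neg.tendsto x₁).mono_left nhdsWithin_le_nhds
    simpa using hx0.mul hu0
  have hlim : Tendsto (fun x => (x - x₁) * (-u x) + (2 * α + 1) * ((x - x₁) / f x))
      (𝓝[≠] x₁) (𝓝 1) := by
    have h := h1.add (hinv.const_mul (2 * α + 1))
    simpa [mul_inv_cancel₀ (ne_of_gt hpos)] using h
  refine ⟨x₁, hzero, huniq, hd1, hcontOn, ?_⟩
  refine hlim.congr fun x => ?_
  simp only [backlund, ← hf_def]
  ring
end

section
/- Let α > −1/2, let m ≥ 1 be a natural number, let p₁ < p₂ < ⋯ < p_m be real numbers with P = {p₁, …, p_m}, and let u be twice differentiable on ℝ ∖ P and satisfy u''(x) = 2u(x)³ + x·u(x) − α there, with alternating simple poles starting with residue +1: (x − p_j)·u(x) → (−1)^{j+1} as x → p_j for each j. Suppose f(x) := 2u(x)² − 2u'(x) + x satisfies: f(x) → −∞ as x → −∞; f(x) → +∞ as x → +∞; f(x) → +∞ as x → p_j for each odd index j; and f(x)/(x − p_j) → −(2α+1) as x → p_j for each even index j. Then the zeros of f in ℝ ∖ P are distributed as follows: exactly one zero in (−∞, p₁); no zeros in (p_{2k−1},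 p_{2k}) for each k with 2k ≤ m; exactly one zero in (p_{2k}, p_{2k+1}) for each k with 2k < m; and, in (p_m, +∞), no zeros if m is odd and exactly one zero if m is even. In particular f has exactly ⌊m/2⌋ + 1 zeros in ℝ ∖ P, and at each such zero z one has f'(z) = 2α + 1. -/
open Filter Topology Set

/-- The pole set `P = {p 1, …, p m}` of a solution with `m` real poles,
indexed by `1, …, m`. -/
def poleSet (m : ℕ) (p : ℕ → ℝ) : Set ℝ := {x : ℝ | ∃ j, 1 ≤ j ∧ j ≤ m ∧ p j = x}

/-- Just left of an upward-crossing zero, `f` is negative. -/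
lemma pii_neg_left {f : ℝ → ℝ} {c x : ℝ} (hc : 0 < c) (hx : f x = 0)
    (hd : HasDerivAt f c x) : ∀ᶠ t in 𝓝[<] x, f t < 0 := by
  have hs : Tendsto (slope f x) (𝓝[<] x) (𝓝 c) :=
    (hasDerivAt_iff_tendsto_slope.1 hd).mono_left
      (nhdsWithin_mono _ (fun t ht => ne_of_lt ht))
  filter_upwards [hs.eventually (eventually_gt_nhds hc), self_mem_nhdsWithin] with t ht ht'
  rw [slope_def_field, hx, sub_zero] at ht
  have h2 : t - x < 0 := sub_neg.2 ht'
  rcases div_pos_iff.1 ht with ⟨h3, h4⟩ | ⟨h3, h4⟩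
  · linarith
  · linarith

/-- Just right of an upward-crossing zero, `f` is positive. -/
lemma pii_pos_right {f : ℝ → ℝ} {c x : ℝ} (hc : 0 < c) (hx : f x = 0)
    (hd : HasDerivAt f c x) : ∀ᶠ t in 𝓝[>] x, 0 < f t := by
  have hs : Tendsto (slope f x) (𝓝[>] x) (𝓝 c) :=
    (hasDerivAt_iff_tendsto_slope.1 hd).mono_left
      (nhdsWithin_mono _ (fun t ht => ne_of_gt ht))
  filter_upwards [hs.eventually (eventually_gt_nhds hc), self_mem_nhdsWithin] with t ht ht'
  rw [slope_def_field, hx, sub_zero] at ht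
  have h2 : 0 < t - x := sub_pos.2 ht'
  rcases div_pos_iff.1 ht with ⟨h3, h4⟩ | ⟨h3, h4⟩
  · linarith
  · linarith

/-- No downward crossing: impossible to go from positive to negative if every zero
has derivative `c > 0`. -/
lemma pii_no_down {f : ℝ → ℝ} {c a b : ℝ} (hc : 0 < c) (hab : a < b)
    (hcont : ContinuousOn f (Icc a b))
    (hz : ∀ z ∈ Icc a b, f z = 0 → HasDerivAt f c z)
    (ha : 0 < f a) (hb : f b < 0) : False := by
  set S : Set ℝ := Icc a b ∩ f ⁻¹' {0} with hS
  have hSclosed : IsClosed S := hcont.preimage_isClosed_of_isClosed isClosed_Icc isClosed_singleton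
  have hSne : S.Nonempty := by
    have h0 : (0:ℝ) ∈ Icc (f b) (f a) := ⟨hb.le, ha.le⟩
    obtain ⟨x, hx, hfx⟩ := intermediate_value_Icc' hab.le hcont h0
    exact ⟨x, hx, by simpa using hfx⟩
  have hSbdd : BddBelow S := ⟨a, fun x hx => hx.1.1⟩
  set s := sInf S with hs
  have hsS : s ∈ S := hSclosed.csInf_mem hSne hSbdd
  have hfs : f s = 0 := hsS.2
  have hsa : a < s := by
    rcases eq_or_lt_of_le hsS.1.1 with h | h
    · exact absurd hfs (by rw [← h]; exact ne_of_gt ha)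
    · exact h
  have hneg := pii_neg_left hc hfs (hz s hsS.1 hfs)
  have hgt : ∀ᶠ t in 𝓝[<] s, a < t := by
    have : Ioi a ∈ 𝓝 s := Ioi_mem_nhds hsa
    exact eventually_nhdsWithin_of_eventually_nhds this
  obtain ⟨t, htneg, hta, hts⟩ := (hneg.and (hgt.and self_mem_nhdsWithin)).exists
  -- t ∈ (a, s), f t < 0, f a > 0: zero in [a, t]
  have htb : t ≤ b := le_trans (le_of_lt hts) hsS.1.2
  have hsub : Icc a t ⊆ Icc a b := Icc_subset_Icc le_rfl htb
  have h0 : (0:ℝ) ∈ Icc (f t) (f a) := ⟨htneg.le, ha.le⟩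
  obtain ⟨x, hx, hfx⟩ := intermediate_value_Icc' hta.le (hcont.mono hsub) h0
  have hxS : x ∈ S := ⟨hsub hx, by simpa using hfx⟩
  have : s ≤ x := csInf_le hSbdd hxS
  have : x < s := lt_of_le_of_lt hx.2 hts
  linarith

/-- At most one zero on an order-connected set. -/
lemma pii_at_most_one {f : ℝ → ℝ} {c : ℝ} (hc : 0 < c) {I : Set ℝ}
    (hI : OrdConnected I) (hcont : ContinuousOn f I)
    (hz : ∀ z ∈ I, f z = 0 → HasDerivAt f c z) {z₁ z₂ : ℝ}
    (h1 : z₁ ∈ I) (h2 : z₂ ∈ I) (hf1 : f z₁ = 0) (hf2 : f z₂ = 0) : z₁ = z₂ := by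
  wlog hlt : z₁ < z₂ generalizing z₁ z₂
  · rcases lt_trichotomy z₁ z₂ with h | h | h
    · exact absurd h hlt
    · exact h
    · exact (this h2 h1 hf2 hf1 h).symm
  exfalso
  have hsub : Icc z₁ z₂ ⊆ I := hI.out h1 h2
  -- a ∈ (z₁, z₂) with f a > 0
  have hpos := pii_pos_right hc hf1 (hz z₁ h1 hf1)
  have hlt2 : ∀ᶠ t in 𝓝[>] z₁, t < z₂ :=
    eventually_nhdsWithin_of_eventually_nhds (eventually_lt_nhds hlt)
  obtain ⟨a, hfa, haz2, haz1⟩ := (hpos.and (hlt2.and self_mem_nhdsWithin)).exists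
  -- b ∈ (a, z₂) with f b < 0
  have hneg := pii_neg_left hc hf2 (hz z₂ h2 hf2)
  have hgt : ∀ᶠ t in 𝓝[<] z₂, a < t :=
    eventually_nhdsWithin_of_eventually_nhds (eventually_gt_nhds haz2)
  obtain ⟨b, hfb, hba, hbz2⟩ := (hneg.and (hgt.and self_mem_nhdsWithin)).exists
  have hsub2 : Icc a b ⊆ Icc z₁ z₂ :=
    Icc_subset_Icc haz1.le hbz2.le
  exact pii_no_down hc hba ((hcont.mono hsub).mono hsub2)
    (fun z hzm => hz z (hsub (hsub2 hzm))) hfa hfb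

/-- No zero on an interval whose left end has `f` eventually positive. -/
lemma pii_no_zero {f : ℝ → ℝ} {c a : ℝ} (hc : 0 < c) {I : Set ℝ}
    (hIa : I ⊆ Ioi a) (hIoo : ∀ z ∈ I, Ioo a z ⊆ I)
    (hcont : ContinuousOn f I)
    (hz : ∀ z ∈ I, f z = 0 → HasDerivAt f c z)
    (hpos : ∀ᶠ x in 𝓝[>] a, 0 < f x) :
    ∀ z ∈ I, f z ≠ 0 := by
  intro z hzI hfz
  have haz : a < z := hIa hzI
  have hneg := pii_neg_left hc hfz (hz z hzI hfz)
  have hgt : ∀ᶠ t in 𝓝[<] z, a < t :=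
    eventually_nhdsWithin_of_eventually_nhds (eventually_gt_nhds haz)
  obtain ⟨b, hfb, hba, hbz⟩ := (hneg.and (hgt.and self_mem_nhdsWithin)).exists
  have hlt2 : ∀ᶠ t in 𝓝[>] a, t < b :=
    eventually_nhdsWithin_of_eventually_nhds (eventually_lt_nhds hba)
  obtain ⟨a', hfa', ha'b, ha'a⟩ := (hpos.and (hlt2.and self_mem_nhdsWithin)).exists
  have hsub : Icc a' b ⊆ I := by
    intro x hx
    exact hIoo z hzI ⟨lt_of_lt_of_le ha'a hx.1, lt_of_le_of_lt hx.2 hbz⟩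
  exact pii_no_down hc ha'b (hcont.mono hsub) (fun w hw => hz w (hsub hw)) hfa' hfb

/-- induction step for Theorems 1.1 and 1.2: let `α > -1/2`
and let `u` solve Painlevé II with parameter `α` on `ℝ ∖ {p 1, …, p m}`
(`p 1 < ⋯ < p m`, `m ≥ 1`) with alternating simple poles of residues
`(-1)^{j+1}` (so residue `+1` at `p 1`).  Assume `f = 2 u^2 - 2 u' + x`
tends to `-∞` at `-∞`, to `+∞` at `+∞`, to `+∞` at each odd-indexed pole,
and satisfies `f(x)/(x - p j) → -(2α+1)` at each even-indexed pole.  Then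
the zeros of `f` off the pole set are: exactly one in `(-∞, p 1)`; none in
each `(p (2k-1), p (2k))`; exactly one in each `(p (2k), p (2k+1))`; and,
beyond `p m`, none if `m` is odd and exactly one if `m` is even.  In total
`f` has exactly `⌊m/2⌋ + 1` such zeros, each with `f' = 2α + 1`. -/
theorem piiF_zero_distribution (α : ℝ) (hα : -1/2 < α) (m : ℕ) (hm : 1 ≤ m)
    (p : ℕ → ℝ) (hp : ∀ i j, 1 ≤ i → i < j → j ≤ m → p i < p j)
    (u u' u'' : ℝ → ℝ)
    (hu : ∀ x ∉ poleSet m p, HasDerivAt u (u' x) x)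
    (hu' : ∀ x ∉ poleSet m p, HasDerivAt u' (u'' x) x)
    (hPII : ∀ x ∉ poleSet m p, u'' x = 2 * (u x) ^ 3 + x * u x - α)
    (hpoles : ∀ j, 1 ≤ j → j ≤ m →
      Tendsto (fun x => (x - p j) * u x) (𝓝[≠] p j) (𝓝 ((-1 : ℝ) ^ (j + 1))))
    (hfbot : Tendsto (piiF u u') atBot atBot)
    (hftop : Tendsto (piiF u u') atTop atTop)
    (hfodd : ∀ j, 1 ≤ j → j ≤ m → Odd j →
      Tendsto (piiF u u') (𝓝[≠] p j) atTop)
    (hfeven : ∀ j, 1 ≤ j → j ≤ m → Even j →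
      Tendsto (fun x => piiF u u' x / (x - p j)) (𝓝[≠] p j)
        (𝓝 (-(2 * α + 1)))) :
    (∃ z, z < p 1 ∧ piiF u u' z = 0 ∧
      ∀ w, w < p 1 → piiF u u' w = 0 → w = z) ∧
    (∀ k, 1 ≤ k → 2 * k ≤ m →
      ∀ w ∈ Set.Ioo (p (2 * k - 1)) (p (2 * k)), piiF u u' w ≠ 0) ∧
    (∀ k, 1 ≤ k → 2 * k < m →
      ∃ z ∈ Set.Ioo (p (2 * k)) (p (2 * k + 1)), piiF u u' z = 0 ∧
        ∀ w ∈ Set.Ioo (p (2 * k)) (p (2 * k + 1)), piiF u u' w = 0 → w = z) ∧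
    (Odd m → ∀ w, p m < w → piiF u u' w ≠ 0) ∧
    (Even m → ∃ z, p m < z ∧ piiF u u' z = 0 ∧
      ∀ w, p m < w → piiF u u' w = 0 → w = z) ∧
    {x | x ∉ poleSet m p ∧ piiF u u' x = 0}.ncard = m / 2 + 1 ∧
    (∀ z ∉ poleSet m p, piiF u u' z = 0 →
      HasDerivAt (piiF u u') (2 * α + 1) z) := by
  set f := piiF u u' with hfdef
  have hc : (0:ℝ) < 2*α+1 := by linarith
  have hmono : ∀ i j, 1 ≤ i → i ≤ j → j ≤ m → p i ≤ p j := by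
    intro i j h1 h2 h3
    rcases eq_or_lt_of_le h2 with h | h
    · exact le_of_eq (by rw [h])
    · exact (hp i j h1 h h3).le
  have hnotP_lt : ∀ x, x < p 1 → x ∉ poleSet m p := by
    rintro x hx ⟨j, hj1, hjm, hjx⟩
    have := hmono 1 j le_rfl hj1 hjm
    rw [hjx] at this; linarith
  have hnotP_gt : ∀ x, p m < x → x ∉ poleSet m p := by
    rintro x hx ⟨j, hj1, hjm, hjx⟩
    have := hmono j m hj1 hjm le_rfl
    rw [hjx] at this; linarith
  have hnotP_mid : ∀ j, 1 ≤ j → j + 1 ≤ m → ∀ x ∈ Ioo (p j) (p (j+1)), x ∉ poleSet m p := by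
    rintro j hj1 hjm x ⟨hx1, hx2⟩ ⟨i, hi1, him, hix⟩
    rcases le_or_gt i j with h | h
    · have := hmono i j hi1 h (by omega)
      rw [hix] at this; linarith
    · have := hmono (j+1) i (by omega) h him
      rw [hix] at this; linarith
  have hcontf : ∀ x ∉ poleSet m p, ContinuousAt f x := by
    intro x hx
    have h1 : ContinuousAt (fun y => 2*(u y)^2 - 2*u' y + y) x :=
      ((((hu x hx).continuousAt.pow 2).const_mul 2).sub
        ((hu' x hx).continuousAt.const_mul 2)).add continuousAt_id
    exact h1
  have hD : ∀ x ∉ poleSet m p, HasDerivAt f (-2*u x*f x + (2*α+1)) x := by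
    intro x hx
    have h1 : HasDerivAt (fun y => 2*(u y)^2 - 2*u' y + y)
        (2*((2:ℕ)*(u x)^(2-1)*u' x) - 2*u'' x + 1) x :=
      ((((hu x hx).pow 2).const_mul 2).sub ((hu' x hx).const_mul 2)).add (hasDerivAt_id x)
    have h2 : (-2*u x*f x + (2*α+1)) = 2*((2:ℕ)*(u x)^(2-1)*u' x) - 2*u'' x + 1 := by
      rw [hPII x hx]
      simp only [hfdef, piiF]
      push_cast
      ring
    rw [h2]
    exact h1
  have hDz : ∀ x ∉ poleSet m p, f x = 0 → HasDerivAt f (2*α+1) x := by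
    intro x hx hfx
    have := hD x hx
    rw [hfx] at this
    simpa using this
  have hposodd : ∀ j, 1 ≤ j → j ≤ m → Odd j →
      (∀ᶠ x in 𝓝[<] p j, 0 < f x) ∧ (∀ᶠ x in 𝓝[>] p j, 0 < f x) := by
    intro j h1 h2 h3
    have h := hfodd j h1 h2 h3
    constructor
    · exact ((h.mono_left (nhdsWithin_mono _ fun x hx => ne_of_lt hx)).eventually_gt_atTop 0)
    · exact ((h.mono_left (nhdsWithin_mono _ fun x hx => ne_of_gt hx)).eventually_gt_atTop 0)
  have hnegeven : ∀ j, 1 ≤ j → j ≤ m → Even j → ∀ᶠ x in 𝓝[>] p j, f x < 0 := by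
    intro j h1 h2 h3
    have h := (hfeven j h1 h2 h3).mono_left (nhdsWithin_mono _ fun x hx => ne_of_gt hx)
    have hlt : ∀ᶠ x in 𝓝[>] p j, f x / (x - p j) < 0 :=
      h.eventually (eventually_lt_nhds (by linarith : -(2*α+1) < (0:ℝ)))
    filter_upwards [hlt, self_mem_nhdsWithin] with x hx hx'
    have hd : 0 < x - p j := sub_pos.2 hx'
    rcases div_neg_iff.1 hx with ⟨h4, h5⟩ | ⟨h4, h5⟩ <;> linarith
  -- Bullet 1
  have B1 : ∃ z, z < p 1 ∧ f z = 0 ∧ ∀ w, w < p 1 → f w = 0 → w = z := by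
    have hcI : ContinuousOn f (Iio (p 1)) :=
      fun x hx => (hcontf x (hnotP_lt x hx)).continuousWithinAt
    have hzI : ∀ z ∈ Iio (p 1), f z = 0 → HasDerivAt f (2*α+1) z :=
      fun z hz => hDz z (hnotP_lt z hz)
    obtain ⟨a, hfa, ha⟩ := ((hfbot.eventually_lt_atBot 0).and (eventually_lt_atBot (p 1))).exists
    obtain ⟨b, hfb, hab, hbp⟩ := (((hposodd 1 le_rfl hm odd_one).1).and
      ((eventually_nhdsWithin_of_eventually_nhds (eventually_gt_nhds ha)).and
        self_mem_nhdsWithin)).exists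
    have hsub : Icc a b ⊆ Iio (p 1) := fun x hx => lt_of_le_of_lt hx.2 hbp
    obtain ⟨z, hz, hfz⟩ := intermediate_value_Icc hab.le (hcI.mono hsub) ⟨hfa.le, hfb.le⟩
    exact ⟨z, hsub hz, hfz, fun w hw hfw =>
      pii_at_most_one hc ordConnected_Iio hcI hzI hw (hsub hz) hfw hfz⟩
  -- Bullet 2
  have B2 : ∀ k, 1 ≤ k → 2*k ≤ m → ∀ w ∈ Ioo (p (2*k-1)) (p (2*k)), f w ≠ 0 := by
    intro k hk hkm w hw
    have hnot : ∀ x ∈ Ioo (p (2*k-1)) (p (2*k)), x ∉ poleSet m p := by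
      have h := hnotP_mid (2*k-1) (by omega) (by omega)
      rw [show 2*k-1+1 = 2*k from by omega] at h
      exact h
    exact pii_no_zero hc Ioo_subset_Ioi_self (fun z hz => Ioo_subset_Ioo le_rfl hz.2.le)
      (fun x hx => (hcontf x (hnot x hx)).continuousWithinAt)
      (fun z hz => hDz z (hnot z hz))
      ((hposodd (2*k-1) (by omega) (by omega) ⟨k-1, by omega⟩).2) w hw
  -- Bullet 3
  have B3 : ∀ k, 1 ≤ k → 2*k < m → ∃ z ∈ Ioo (p (2*k)) (p (2*k+1)), f z = 0 ∧
      ∀ w ∈ Ioo (p (2*k)) (p (2*k+1)), f w = 0 → w = z := by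
    intro k hk hkm
    have hnot : ∀ x ∈ Ioo (p (2*k)) (p (2*k+1)), x ∉ poleSet m p :=
      fun x hx => hnotP_mid (2*k) (by omega) (by omega) x hx
    have hcI : ContinuousOn f (Ioo (p (2*k)) (p (2*k+1))) :=
      fun x hx => (hcontf x (hnot x hx)).continuousWithinAt
    have hzI : ∀ z ∈ Ioo (p (2*k)) (p (2*k+1)), f z = 0 → HasDerivAt f (2*α+1) z :=
      fun z hz => hDz z (hnot z hz)
    have hpp : p (2*k) < p (2*k+1) := hp _ _ (by omega) (by omega) (by omega)
    obtain ⟨a, hfa, hap, ha2⟩ := ((hnegeven (2*k) (by omega) (by omega) ⟨k, two_mul k⟩).and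
      ((eventually_nhdsWithin_of_eventually_nhds (eventually_lt_nhds hpp)).and
        self_mem_nhdsWithin)).exists
    obtain ⟨b, hfb, hab, hbp⟩ := (((hposodd (2*k+1) (by omega) (by omega) ⟨k, rfl⟩).1).and
      ((eventually_nhdsWithin_of_eventually_nhds (eventually_gt_nhds hap)).and
        self_mem_nhdsWithin)).exists
    have hsub : Icc a b ⊆ Ioo (p (2*k)) (p (2*k+1)) :=
      fun x hx => ⟨lt_of_lt_of_le ha2 hx.1, lt_of_le_of_lt hx.2 hbp⟩
    obtain ⟨z, hz, hfz⟩ := intermediate_value_Icc hab.le (hcI.mono hsub) ⟨hfa.le, hfb.le⟩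
    exact ⟨z, hsub hz, hfz, fun w hw hfw =>
      pii_at_most_one hc ordConnected_Ioo hcI hzI hw (hsub hz) hfw hfz⟩
  -- Bullet 4
  have B4 : Odd m → ∀ w, p m < w → f w ≠ 0 := by
    intro hodd w hw
    exact pii_no_zero hc (subset_rfl) (fun z _ => Ioo_subset_Ioi_self)
      (fun x hx => (hcontf x (hnotP_gt x hx)).continuousWithinAt)
      (fun z hz => hDz z (hnotP_gt z hz))
      ((hposodd m hm le_rfl hodd).2) w hw
  -- Bullet 5
  have B5 : Even m → ∃ z, p m < z ∧ f z = 0 ∧ ∀ w, p m < w → f w = 0 → w = z := by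
    intro heven
    have hcI : ContinuousOn f (Ioi (p m)) :=
      fun x hx => (hcontf x (hnotP_gt x hx)).continuousWithinAt
    have hzI : ∀ z ∈ Ioi (p m), f z = 0 → HasDerivAt f (2*α+1) z :=
      fun z hz => hDz z (hnotP_gt z hz)
    obtain ⟨a, hfa, ha2⟩ := ((hnegeven m hm le_rfl heven).and self_mem_nhdsWithin).exists
    obtain ⟨b, hfb, hab⟩ := ((hftop.eventually_gt_atTop 0).and (eventually_gt_atTop a)).exists
    have hsub : Icc a b ⊆ Ioi (p m) := fun x hx => lt_of_lt_of_le ha2 hx.1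
    obtain ⟨z, hz, hfz⟩ := intermediate_value_Icc hab.le (hcI.mono hsub) ⟨hfa.le, hfb.le⟩
    exact ⟨z, hsub hz, hfz, fun w hw hfw =>
      pii_at_most_one hc ordConnected_Ioi hcI hzI hw (hsub hz) hfw hfz⟩
  -- partition of the complement of the pole set
  have hpart : ∀ x ∉ poleSet m p, x < p 1 ∨
      (∃ j, 1 ≤ j ∧ j < m ∧ x ∈ Ioo (p j) (p (j+1))) ∨ p m < x := by
    intro x hx
    by_cases h1 : x < p 1
    · exact Or.inl h1
    by_cases h2 : p m < x
    · exact Or.inr (Or.inr h2)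
    push_neg at h1 h2
    have hne : ∀ j, 1 ≤ j → j ≤ m → p j ≠ x := fun j hj1 hjm he => hx ⟨j, hj1, hjm, he⟩
    have h1' : p 1 < x := lt_of_le_of_ne h1 (hne 1 le_rfl hm)
    have h1F : 1 ∈ (Finset.Icc 1 m).filter (fun j => p j < x) :=
      Finset.mem_filter.2 ⟨Finset.mem_Icc.2 ⟨le_rfl, hm⟩, h1'⟩
    set F := (Finset.Icc 1 m).filter (fun j => p j < x) with hF
    set j := F.max' ⟨1, h1F⟩ with hj
    have hjF : j ∈ F := F.max'_mem _
    obtain ⟨hjIcc, hjx⟩ := Finset.mem_filter.1 hjF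
    obtain ⟨hj1, hjm⟩ := Finset.mem_Icc.1 hjIcc
    have hjltm : j < m := by
      rcases eq_or_lt_of_le hjm with h | h
      · exfalso; rw [h] at hjx; exact absurd hjx (not_lt.2 h2)
      · exact h
    have hnot : j+1 ∉ F := by
      intro hmem
      have := F.le_max' _ hmem
      omega
    have hxle : x ≤ p (j+1) := by
      by_contra h
      push_neg at h
      exact hnot (Finset.mem_filter.2 ⟨Finset.mem_Icc.2 ⟨by omega, by omega⟩, h⟩)
    have hxlt : x < p (j+1) :=
      lt_of_le_of_ne hxle (fun he => hne (j+1) (by omega) (by omega) he.symm)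
    exact Or.inr (Or.inl ⟨j, hj1, hjltm, hjx, hxlt⟩)
  -- choice function for the zeros
  have hEx : ∀ k, ∃ z : ℝ,
      (k = 0 → z < p 1 ∧ f z = 0 ∧ ∀ w, w < p 1 → f w = 0 → w = z) ∧
      (1 ≤ k → 2*k < m → z ∈ Ioo (p (2*k)) (p (2*k+1)) ∧ f z = 0 ∧
        ∀ w ∈ Ioo (p (2*k)) (p (2*k+1)), f w = 0 → w = z) ∧
      (Even m → 1 ≤ k → 2*k = m → p m < z ∧ f z = 0 ∧
        ∀ w, p m < w → f w = 0 → w = z) := by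
    intro k
    by_cases h0 : k = 0
    · obtain ⟨z, hz⟩ := B1
      exact ⟨z, fun _ => hz, fun h => by omega, fun _ h => by omega⟩
    by_cases h1 : 2*k < m
    · obtain ⟨z, hzm, hzf, hzu⟩ := B3 k (by omega) h1
      exact ⟨z, fun h => absurd h h0, fun _ _ => ⟨hzm, hzf, hzu⟩, fun _ _ h => by omega⟩
    by_cases h2 : Even m ∧ 2*k = m
    · obtain ⟨z, hz⟩ := B5 h2.1
      exact ⟨z, fun h => absurd h h0, fun _ h => absurd h h1, fun _ _ _ => hz⟩
    · exact ⟨0, fun h => absurd h h0, fun _ h => absurd h h1,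
        fun he _ hk => absurd ⟨he, hk⟩ h2⟩
  choose g hg using hEx
  -- facts about g on {0, ..., m/2}
  have hcase : ∀ k, 1 ≤ k → k ≤ m/2 → (2*k < m) ∨ (Even m ∧ 2*k = m) := by
    intro k hk1 hk2
    rcases lt_or_ge (2*k) m with h | h
    · exact Or.inl h
    · right
      have h2 : 2*k = m := by omega
      exact ⟨⟨k, by omega⟩, h2⟩
  have gmem : ∀ k, k ≤ m/2 → g k ∉ poleSet m p ∧ f (g k) = 0 := by
    intro k hk
    by_cases h0 : k = 0
    · obtain ⟨hz1, hz2, _⟩ := (hg k).1 h0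
      exact ⟨hnotP_lt _ hz1, hz2⟩
    rcases hcase k (by omega) hk with h | h
    · obtain ⟨hzm, hzf, _⟩ := (hg k).2.1 (by omega) h
      exact ⟨hnotP_mid (2*k) (by omega) (by omega) _ hzm, hzf⟩
    · obtain ⟨hz1, hz2, _⟩ := (hg k).2.2 h.1 (by omega) h.2
      exact ⟨hnotP_gt _ hz1, hz2⟩
  have glow : ∀ k, 1 ≤ k → k ≤ m/2 → p (2*k) < g k := by
    intro k hk1 hk2
    rcases hcase k hk1 hk2 with h | h
    · exact ((hg k).2.1 hk1 h).1.1
    · have := ((hg k).2.2 h.1 hk1 h.2).1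
      rw [← h.2] at this
      exact this
  have ghigh : ∀ k l, k < l → l ≤ m/2 → g k < p (2*l) := by
    intro k l hkl hl
    have h2lm : 2*l ≤ m := by omega
    by_cases h0 : k = 0
    · have h1 := ((hg k).1 h0).1
      calc g k < p 1 := h1
        _ ≤ p (2*l) := hmono 1 (2*l) le_rfl (by omega) h2lm
    · have h2km : 2*k < m := by omega
      have h1 := ((hg k).2.1 (by omega) h2km).1.2
      calc g k < p (2*k+1) := h1
        _ ≤ p (2*l) := hmono (2*k+1) (2*l) (by omega) (by omega) h2lm
  have gstrict : ∀ k l, k < l → l ≤ m/2 → g k < g l := by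
    intro k l hkl hl
    exact lt_trans (ghigh k l hkl hl) (glow l (by omega) hl)
  -- the zero set is the image of g on range (m/2 + 1)
  have hZ : {x | x ∉ poleSet m p ∧ f x = 0} = ↑((Finset.range (m/2+1)).image g) := by
    ext x
    simp only [Finset.coe_image, Finset.coe_range, Set.mem_image, Set.mem_Iio, Set.mem_setOf_eq]
    constructor
    · rintro ⟨hxP, hxf⟩
      rcases hpart x hxP with h | ⟨j, hj1, hjm, hjx⟩ | h
      · exact ⟨0, by omega, (((hg 0).1 rfl).2.2 x h hxf).symm⟩
      · rcases Nat.even_or_odd j with he | ho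
        · obtain ⟨k, hk⟩ := he
          have hkm : 2*k < m := by omega
          have h2 := (hg k).2.1 (by omega) hkm
          refine ⟨k, by omega, (h2.2.2 x ?_ hxf).symm⟩
          have e1 : j = 2*k := by omega
          rw [e1] at hjx
          exact hjx
        · obtain ⟨k', hk'⟩ := ho
          exfalso
          refine B2 (k'+1) (by omega) (by omega) x ?_ hxf
          have e1 : 2*(k'+1)-1 = j := by omega
          have e2 : 2*(k'+1) = j+1 := by omega
          rw [e1, e2]
          exact hjx
      · rcases Nat.even_or_odd m with he | ho
        · have heq : 2*(m/2) = m := by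
            obtain ⟨r, hr⟩ := he; omega
          have hk1 : 1 ≤ m/2 := by omega
          have h2 := (hg (m/2)).2.2 he hk1 heq
          exact ⟨m/2, by omega, (h2.2.2 x h hxf).symm⟩
        · exact absurd hxf (B4 ho x h)
    · rintro ⟨k, hk, rfl⟩
      exact gmem k (by omega)
  refine ⟨B1, B2, B3, B4, B5, ?_, fun z hz hfz => hDz z hz hfz⟩
  rw [hZ, Set.ncard_coe_finset, Finset.card_image_of_injOn, Finset.card_range]
  intro a ha b hb hab
  simp only [Finset.coe_range, Set.mem_Iio] at ha hb
  rcases lt_trichotomy a b with h | h | h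
  · exact absurd hab (ne_of_lt (gstrict a b h (by omega)))
  · exact h
  · exact absurd hab.symm (ne_of_lt (gstrict b a h (by omega)))
end

section
/- Let α > −1/2, let m ≥ 1 be a natural number, let p₁ < p₂ < ⋯ < p_m be real numbers with P = {p₁, …, p_m}, and let u be twice differentiable on ℝ ∖ P and satisfy u''(x) = 2u(x)³ + x·u(x) − α there, with alternating simple poles starting with residue +1: (x − p_j)·u(x) → (−1)^{j+1} as x → p_j for each j. Suppose f(x) := 2u(x)² − 2u'(x) + x satisfies: f(x) → −∞ as x → −∞; f(x) → +∞ as x → +∞; f(x) → +∞ as x → p_j for each odd index j; and f(x)/(x − p_j) → −(2α+1) as x → p_j for each even index j. Let Z denote the set of zeros of f in ℝ ∖ P and let Q = Z ∪ {p_j : j odd}. Then Q has exactly m + 1 elements, and the Bäcklund transform v(x) := −u(x) + (2α+1)/f(x), defined on ℝ ∖ (P ∪ Z), satisfies: (x − q)·v(x) → +1 as x → q for each q ∈ Z, (x − q)·v(x) → −1 as x → q for each odd-indexed pole q = p_{2k−1}, and (x − q)·v(x) → 0 as x → q for each even-indexed pole q = p_{2k}. Moreover, when the m + 1 points of Q are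 listed in increasing order, these limits alternate +1, −1, +1, … starting with +1; the smallest element of Q is strictly less than p₁; and the largest element of Q equals p_m if m is odd and is strictly greater than p_m if m is even. -/
open Filter Topology Set

/-- Theorems 1.1 and 1.2: let `α > -1/2` and let `u` solve
Painlevé II with parameter `α` on `ℝ ∖ {p 1, …, p m}` (`p 1 < ⋯ < p m`,
`m ≥ 1`) with alternating simple poles of residues `(-1)^{j+1}`, and assume
the stated limiting behaviour of `f = 2 u^2 - 2 u' + x` at `±∞` and at the
poles.  Let `Z` be the set of zeros of `f` off the pole set and
`Q = Z ∪ {p j : j odd}`.  Then `Q` has exactly `m + 1` elements, and the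
Bäcklund transform `v = -u + (2α+1)/f` satisfies `(x-q) v(x) → +1` at each
`q ∈ Z`, `→ -1` at each odd-indexed pole, and `→ 0` at each even-indexed
pole.  Listing `Q` in increasing order, these limits alternate
`+1, -1, +1, …` starting with `+1`; the smallest element of `Q` is `< p 1`;
and the largest element equals `p m` if `m` is odd and is `> p m` if `m` is
even. -/
theorem backlund_poles_alternate (α : ℝ) (hα : -1/2 < α) (m : ℕ) (hm : 1 ≤ m)
    (p : ℕ → ℝ) (hp : ∀ i j, 1 ≤ i → i < j → j ≤ m → p i < p j)
    (u u' u'' : ℝ → ℝ)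
    (hu : ∀ x ∉ poleSet m p, HasDerivAt u (u' x) x)
    (hu' : ∀ x ∉ poleSet m p, HasDerivAt u' (u'' x) x)
    (hPII : ∀ x ∉ poleSet m p, u'' x = 2 * (u x) ^ 3 + x * u x - α)
    (hpoles : ∀ j, 1 ≤ j → j ≤ m →
      Tendsto (fun x => (x - p j) * u x) (𝓝[≠] p j) (𝓝 ((-1 : ℝ) ^ (j + 1))))
    (hfbot : Tendsto (piiF u u') atBot atBot)
    (hftop : Tendsto (piiF u u') atTop atTop)
    (hfodd : ∀ j, 1 ≤ j → j ≤ m → Odd j →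
      Tendsto (piiF u u') (𝓝[≠] p j) atTop)
    (hfeven : ∀ j, 1 ≤ j → j ≤ m → Even j →
      Tendsto (fun x => piiF u u' x / (x - p j)) (𝓝[≠] p j)
        (𝓝 (-(2 * α + 1)))) :
    ({x | x ∉ poleSet m p ∧ piiF u u' x = 0} ∪
        {x | ∃ j, 1 ≤ j ∧ j ≤ m ∧ Odd j ∧ p j = x}).ncard = m + 1 ∧
    (∀ z ∉ poleSet m p, piiF u u' z = 0 →
      Tendsto (fun x => (x - z) * backlund α u u' x) (𝓝[≠] z) (𝓝 1)) ∧
    (∀ j, 1 ≤ j → j ≤ m → Odd j →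
      Tendsto (fun x => (x - p j) * backlund α u u' x) (𝓝[≠] p j)
        (𝓝 (-1))) ∧
    (∀ j, 1 ≤ j → j ≤ m → Even j →
      Tendsto (fun x => (x - p j) * backlund α u u' x) (𝓝[≠] p j)
        (𝓝 0)) ∧
    (∃ q : Fin (m + 1) → ℝ, StrictMono q ∧
      Set.range q = {x | x ∉ poleSet m p ∧ piiF u u' x = 0} ∪
        {x | ∃ j, 1 ≤ j ∧ j ≤ m ∧ Odd j ∧ p j = x} ∧
      (∀ i : Fin (m + 1),
        Tendsto (fun x => (x - q i) * backlund α u u' x) (𝓝[≠] q i)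
          (𝓝 ((-1 : ℝ) ^ (i : ℕ)))) ∧
      q 0 < p 1 ∧
      (Odd m → q (Fin.last m) = p m) ∧
      (Even m → p m < q (Fin.last m))) := by
  have hα' : (0:ℝ) < 2*α+1 := by linarith
  set f := piiF u u' with hfdef
  set P := poleSet m p with hPdef
  have hfd : ∀ x ∉ P, HasDerivAt f ((2*α+1) - 2 * u x * f x) x := by
    intro x hx
    have ha : HasDerivAt (fun y => (u y)^2) (2*u x*u' x) x := by
      simpa [mul_comm, mul_assoc] using (hu x hx).fun_pow 2
    have h2 : HasDerivAt f (2*(2*u x*u' x) - 2*u'' x + 1) x :=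
      ((ha.const_mul 2).sub ((hu' x hx).const_mul 2)).add (hasDerivAt_id x)
    convert h2 using 1
    rw [hPII x hx]
    simp only [hfdef, piiF]
    ring
  have hfc : ∀ x ∉ P, ContinuousAt f x := fun x hx => (hfd x hx).continuousAt
  have slopeZ : ∀ z ∉ P, f z = 0 →
      Tendsto (fun x => f x / (x - z)) (𝓝[≠] z) (𝓝 (2*α+1)) := by
    intro z hz hz0
    have h := hasDerivAt_iff_tendsto_slope.mp (hfd z hz)
    rw [hz0] at h
    have h' : Tendsto (slope f z) (𝓝[≠] z) (𝓝 (2*α+1)) := by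
      convert h using 2; ring
    refine h'.congr fun x => ?_
    rw [slope_def_field, hz0, sub_zero]
  have key : ∀ t z : ℝ, t < z → (∀ x ∈ Icc t z, x ∉ P) → 0 < f t → f z = 0 → False := by
    intro t z htz hsub hft hfz
    have hcont : ContinuousOn f (Icc t z) := fun x hx => (hfc x (hsub x hx)).continuousWithinAt
    set S : Set ℝ := Icc t z ∩ f ⁻¹' {0} with hS
    have hzS : z ∈ S := ⟨⟨le_of_lt htz, le_refl z⟩, hfz⟩
    have hSclosed : IsClosed S :=
      hcont.preimage_isClosed_of_isClosed isClosed_Icc isClosed_singleton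
    have hsS : sInf S ∈ S := hSclosed.csInf_mem ⟨z, hzS⟩ ⟨t, fun x hx => hx.1.1⟩
    set s := sInf S with hsdef
    have hfs : f s = 0 := hsS.2
    have hts : t < s := by
      rcases lt_or_eq_of_le hsS.1.1 with h | h
      · exact h
      · exact absurd hfs (by rw [← h]; exact ne_of_gt hft)
    have hnonneg : ∀ x ∈ Ico t s, 0 ≤ f x := by
      intro x hx
      by_contra hneg
      push_neg at hneg
      have hsub2 : Icc t x ⊆ Icc t z := Icc_subset_Icc le_rfl (le_trans hx.2.le hsS.1.2)
      obtain ⟨y, hy, hy0⟩ := intermediate_value_Icc' hx.1 (hcont.mono hsub2)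
        (mem_Icc.mpr ⟨le_of_lt hneg, le_of_lt hft⟩)
      have hyS : y ∈ S := ⟨hsub2 hy, hy0⟩
      have h1 := csInf_le ⟨t, fun w hw => hw.1.1⟩ hyS
      have : s ≤ x := le_trans h1 hy.2
      exact absurd hx.2 (not_lt.mpr this)
    have hslope := hasDerivAt_iff_tendsto_slope.mp (hfd s (hsub s hsS.1))
    have h1 : Tendsto (slope f s) (𝓝[<] s) (𝓝 (2*α+1)) := by
      have := hslope.mono_left (nhdsWithin_mono s (fun x (hx : x ∈ Iio s) => ne_of_lt hx))
      convert this using 2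
      rw [hfs]; ring
    have hle : (2*α+1) ≤ 0 := by
      refine le_of_tendsto h1 ?_
      filter_upwards [Ioo_mem_nhdsLT hts] with x hx
      have hx0 : 0 ≤ f x := hnonneg x ⟨hx.1.le, hx.2⟩
      rw [slope_def_field, hfs, sub_zero]
      exact div_nonpos_of_nonneg_of_nonpos hx0 (by linarith [hx.2])
    linarith
  -- PART 2 --
  have pmono : ∀ i j, 1 ≤ i → i ≤ j → j ≤ m → p i ≤ p j := by
    intro i j h1 h2 h3
    rcases eq_or_lt_of_le h2 with rfl | h
    · exact le_rfl
    · exact (hp i j h1 h h3).le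
  set J : ℕ → Set ℝ := fun j =>
    {x : ℝ | (j = 0 → x < p 1) ∧ (1 ≤ j → p j < x) ∧ (j < m → x < p (j+1))} with hJdef
  have JOC : ∀ j, ∀ a ∈ J j, ∀ b ∈ J j, Icc a b ⊆ J j := by
    intro j a ha b hb x hx
    exact ⟨fun h0 => lt_of_le_of_lt hx.2 (hb.1 h0),
           fun h1 => lt_of_lt_of_le (ha.2.1 h1) hx.1,
           fun hm' => lt_of_le_of_lt hx.2 (hb.2.2 hm')⟩
  have Javoid : ∀ j, j ≤ m → ∀ x ∈ J j, x ∉ P := by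
    intro j hj x hx hxP
    obtain ⟨i, h1i, him, hpi⟩ := hxP
    obtain ⟨c0, c1, c2⟩ := hx
    rcases Nat.eq_zero_or_pos j with rfl | hj1
    · have h1 := c0 rfl
      have h2 := pmono 1 i le_rfl h1i him
      linarith [hpi ▸ h2]
    · have h := c1 hj1
      have hji : j < i := by
        by_contra hcon
        push_neg at hcon
        have := pmono i j h1i hcon hj
        rw [hpi] at this
        linarith
      have hjm : j < m := lt_of_lt_of_le hji him
      have h2 := c2 hjm
      have h3 : p (j+1) ≤ p i := pmono (j+1) i (by omega) (by omega) him
      rw [hpi] at h3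
      linarith
  have Jdisj : ∀ j, j ≤ m → ∀ k, k ≤ m → ∀ x, x ∈ J j → x ∈ J k → j = k := by
    have aux : ∀ j k, j < k → k ≤ m → ∀ x, x ∈ J j → x ∈ J k → False := by
      intro j k hjk hk x hxj hxk
      have hk1 : 1 ≤ k := by omega
      have h1 : p k < x := hxk.2.1 hk1
      have hjm : j < m := by omega
      have h2 : x < p (j+1) := hxj.2.2 hjm
      have h3 : p (j+1) ≤ p k := pmono (j+1) k (by omega) (by omega) hk
      linarith
    intro j hj k hk x hxj hxk
    rcases lt_trichotomy j k with h | h | h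
    · exact absurd (aux j k h hk x hxj hxk) not_false
    · exact h
    · exact absurd (aux k j h hj x hxk hxj) not_false
  have cover : ∀ x, x ∉ P → ∃ j, j ≤ m ∧ x ∈ J j := by
    intro x hx
    by_cases h0 : x < p 1
    · exact ⟨0, Nat.zero_le m, fun _ => h0, fun h => absurd h (by omega), fun _ => h0⟩
    · push_neg at h0
      have hne1 : p 1 ≠ x := fun h => hx ⟨1, le_rfl, hm, h⟩
      have h1x : p 1 < x := lt_of_le_of_ne h0 hne1
      set S : Finset ℕ := (Finset.Icc 1 m).filter (fun j => p j < x) with hSdef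
      have h1S : (1:ℕ) ∈ S := by
        simp only [hSdef, Finset.mem_filter, Finset.mem_Icc]
        exact ⟨⟨le_rfl, hm⟩, h1x⟩
      have hSne : S.Nonempty := ⟨1, h1S⟩
      set j := S.max' hSne with hjdef
      have hjS : j ∈ S := S.max'_mem hSne
      rw [hSdef, Finset.mem_filter, Finset.mem_Icc] at hjS
      obtain ⟨⟨hj1, hjm⟩, hpj⟩ := hjS
      refine ⟨j, hjm, fun h => absurd h (by omega), fun _ => hpj, fun hjltm => ?_⟩
      have hnot : j + 1 ∉ S := fun hmem => by
        have := S.le_max' (j+1) hmem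
        omega
      have hnlt : ¬ (p (j+1) < x) := fun hlt =>
        hnot (by
          simp only [hSdef, Finset.mem_filter, Finset.mem_Icc]
          exact ⟨⟨by omega, by omega⟩, hlt⟩)
      have hne : p (j+1) ≠ x := fun h => hx ⟨j+1, by omega, by omega, h⟩
      exact lt_of_le_of_ne (not_lt.mp hnlt) (Ne.symm hne)
  -- at most one zero in each J j
  have uniq : ∀ j, j ≤ m → ∀ z1 ∈ J j, ∀ z2 ∈ J j, f z1 = 0 → f z2 = 0 → z1 = z2 := by
    have aux : ∀ j, j ≤ m → ∀ z1 ∈ J j, ∀ z2 ∈ J j, f z1 = 0 → f z2 = 0 → z1 < z2 → False := by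
      intro j hj z1 hz1 z2 hz2 h1 h2 h12
      have hz1P : z1 ∉ P := Javoid j hj z1 hz1
      have ev1 : ∀ᶠ x in 𝓝[≠] z1, 0 < f x / (x - z1) :=
        (slopeZ z1 hz1P h1).eventually (eventually_gt_nhds hα')
      have ev2 : ∀ᶠ x in 𝓝[>] z1, 0 < f x / (x - z1) :=
        ev1.filter_mono (nhdsWithin_mono z1 (fun x (hx : x ∈ Ioi z1) => ne_of_gt hx))
      obtain ⟨t, ht1, ht2⟩ := (ev2.and (eventually_of_mem (Ioo_mem_nhdsGT h12) fun _ h => h)).exists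
      have htz1 : z1 < t := ht2.1
      have htz2 : t < z2 := ht2.2
      have hft : 0 < f t := by
        rcases div_pos_iff.mp ht1 with ⟨h, _⟩ | ⟨_, h⟩
        · exact h
        · linarith
      have hsub : Icc t z2 ⊆ J j := fun x hx =>
        JOC j z1 hz1 z2 hz2 ⟨le_trans htz1.le hx.1, hx.2⟩
      exact key t z2 htz2 (fun x hx => Javoid j hj x (hsub hx)) hft h2
    intro j hj z1 hz1 z2 hz2 h1 h2
    rcases lt_trichotomy z1 z2 with h | h | h
    · exact absurd (aux j hj z1 hz1 z2 hz2 h1 h2 h) not_false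
    · exact h
    · exact absurd (aux j hj z2 hz2 z1 hz1 h2 h1 h) not_false
  -- no zero in odd intervals
  have nodd : ∀ j, j ≤ m → Odd j → ∀ z ∈ J j, f z ≠ 0 := by
    intro j hj hodd z hz hfz
    have hj1 : 1 ≤ j := hodd.pos
    have hpz : p j < z := hz.2.1 hj1
    have ev1 : ∀ᶠ x in 𝓝[≠] p j, 0 < f x := (hfodd j hj1 hj hodd).eventually (eventually_gt_atTop 0)
    have ev2 : ∀ᶠ x in 𝓝[>] p j, 0 < f x :=
      ev1.filter_mono (nhdsWithin_mono _ (fun x (hx : x ∈ Ioi (p j)) => ne_of_gt hx))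
    obtain ⟨t, ht1, ht2⟩ := (ev2.and (eventually_of_mem (Ioo_mem_nhdsGT hpz) fun _ h => h)).exists
    have htJ : t ∈ J j :=
      ⟨fun h0 => absurd h0 (by omega), fun _ => ht2.1,
       fun hm' => lt_trans ht2.2 (hz.2.2 hm')⟩
    have hsub : Icc t z ⊆ J j := JOC j t htJ z hz
    exact key t z ht2.2 (fun x hx => Javoid j hj x (hsub hx)) ht1 hfz
  -- existence of a zero in each even interval
  have exzero : ∀ j, ∃ z, (j ≤ m ∧ Even j) → z ∈ J j ∧ f z = 0 := by
    intro j
    by_cases hcase : j ≤ m ∧ Even j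
    swap
    · exact ⟨0, fun h => absurd h hcase⟩
    obtain ⟨hj, heven⟩ := hcase
    obtain ⟨t, htJ, htneg⟩ : ∃ t ∈ J j, f t < 0 := by
      rcases Nat.eq_zero_or_pos j with rfl | hj1
      · obtain ⟨t, ht1, ht2⟩ := ((hfbot.eventually (eventually_lt_atBot 0)).and
          (eventually_lt_atBot (p 1))).exists
        exact ⟨t, ⟨fun _ => ht2, fun h => absurd h (by omega), fun _ => ht2⟩, ht1⟩
      · have ev1 : ∀ᶠ x in 𝓝[≠] p j, f x / (x - p j) < 0 :=
          (hfeven j hj1 hj heven).eventually (eventually_lt_nhds (by linarith))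
        have ev2 : ∀ᶠ x in 𝓝[>] p j, f x / (x - p j) < 0 :=
          ev1.filter_mono (nhdsWithin_mono _ (fun x (hx : x ∈ Ioi (p j)) => ne_of_gt hx))
        rcases lt_or_ge j m with hjm | hjm
        · have hpp : p j < p (j+1) := hp j (j+1) hj1 (by omega) (by omega)
          obtain ⟨t, ht1, ht2⟩ := (ev2.and (eventually_of_mem
            (Ioo_mem_nhdsGT hpp) fun _ h => h)).exists
          have hft : f t < 0 := by
            rcases div_neg_iff.mp ht1 with ⟨_, h⟩ | ⟨h, _⟩
            · linarith [ht2.1]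
            · exact h
          exact ⟨t, ⟨fun h0 => absurd h0 (by omega), fun _ => ht2.1, fun _ => ht2.2⟩, hft⟩
        · have hjm' : j = m := le_antisymm hj hjm
          obtain ⟨t, ht1, ht2⟩ := (ev2.and (eventually_of_mem self_mem_nhdsWithin fun _ h => h)).exists
          have htpj : p j < t := ht2
          have hft : f t < 0 := by
            rcases div_neg_iff.mp ht1 with ⟨_, h⟩ | ⟨h, _⟩
            · linarith
            · exact h
          exact ⟨t, ⟨fun h0 => absurd h0 (by omega), fun _ => htpj,
            fun h => absurd h (by omega)⟩, hft⟩
    obtain ⟨b, hbJ, hbpos, htb⟩ : ∃ b ∈ J j, 0 < f b ∧ t < b := by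
      rcases lt_or_ge j m with hjm | hjm
      · have hodd1 : Odd (j+1) := Even.add_one heven
        have htp : t < p (j+1) := htJ.2.2 hjm
        have ev1 : ∀ᶠ x in 𝓝[≠] p (j+1), 0 < f x :=
          (hfodd (j+1) (by omega) (by omega) hodd1).eventually (eventually_gt_atTop 0)
        have ev2 : ∀ᶠ x in 𝓝[<] p (j+1), 0 < f x :=
          ev1.filter_mono (nhdsWithin_mono _ (fun x (hx : x ∈ Iio (p (j+1))) => ne_of_lt hx))
        obtain ⟨b, hb1, hb2⟩ := (ev2.and (eventually_of_mem
          (Ioo_mem_nhdsLT htp) fun _ h => h)).exists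
        refine ⟨b, ⟨fun h0 => ?_, fun h1 => ?_, fun _ => hb2.2⟩, hb1, hb2.1⟩
        · subst h0; exact hb2.2
        · exact lt_trans (htJ.2.1 h1) hb2.1
      · have hjm' : j = m := le_antisymm hj hjm
        obtain ⟨b, hb1, hb2⟩ := ((hftop.eventually (eventually_gt_atTop 0)).and
          (eventually_gt_atTop t)).exists
        have hj1 : 1 ≤ j := by omega
        exact ⟨b, ⟨fun h0 => absurd h0 (by omega), fun _ => lt_trans (htJ.2.1 hj1) hb2,
          fun h => absurd h (by omega)⟩, hb1, hb2⟩
    have hsub : Icc t b ⊆ J j := JOC j t htJ b hbJ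
    have hcont : ContinuousOn f (Icc t b) :=
      fun x hx => (hfc x (Javoid j hj x (hsub hx))).continuousWithinAt
    obtain ⟨z, hz, hz0⟩ := intermediate_value_Icc htb.le hcont
      (mem_Icc.mpr ⟨htneg.le, hbpos.le⟩)
    exact ⟨z, fun _ => ⟨hsub hz, hz0⟩⟩
  choose ζ hζ using exzero
  have hζmem : ∀ j, j ≤ m → Even j → ζ j ∈ J j := fun j h1 h2 => (hζ j ⟨h1, h2⟩).1
  have hζzero : ∀ j, j ≤ m → Even j → f (ζ j) = 0 := fun j h1 h2 => (hζ j ⟨h1, h2⟩).2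
  -- rewriting the Bäcklund transform
  have hback : ∀ z x : ℝ, (x - z) * backlund α u u' x =
      (x - z) * (-u x) + (x - z) * ((2*α+1)/f x) := by
    intro z x
    rw [hfdef]
    simp only [backlund]
    ring
  -- limit at a zero of f
  have hbul2 : ∀ z ∉ P, f z = 0 →
      Tendsto (fun x => (x - z) * backlund α u u' x) (𝓝[≠] z) (𝓝 1) := by
    intro z hz hz0
    have hslope := slopeZ z hz hz0
    have hcu : ContinuousAt u z := (hu z hz).continuousAt
    have h1 : Tendsto (fun x => (x - z) * (-u x)) (𝓝[≠] z) (𝓝 0) := by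
      have h : Tendsto (fun x : ℝ => (x - z) * (-u x)) (𝓝 z) (𝓝 ((z - z) * (-u z))) :=
        ((continuousAt_id.sub continuousAt_const).mul hcu.neg)
      simpa using h.mono_left nhdsWithin_le_nhds
    have h2 : Tendsto (fun x => (x - z) * ((2*α+1)/f x)) (𝓝[≠] z) (𝓝 1) := by
      have hinv : Tendsto (fun x => (f x / (x - z))⁻¹) (𝓝[≠] z) (𝓝 (2*α+1)⁻¹) :=
        hslope.inv₀ (ne_of_gt hα')
      have hmul := hinv.const_mul (2*α+1)
      rw [mul_inv_cancel₀ (ne_of_gt hα')] at hmul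
      refine Tendsto.congr' ?_ hmul
      filter_upwards [self_mem_nhdsWithin] with x hx
      have hxz : x - z ≠ 0 := sub_ne_zero.mpr hx
      by_cases hfx : f x = 0
      · simp [hfx]
      · field_simp
    have h3 := h1.add h2
    rw [zero_add] at h3
    exact h3.congr fun x => (hback z x).symm
  -- limit at an odd pole
  have hbul3 : ∀ j, 1 ≤ j → j ≤ m → Odd j →
      Tendsto (fun x => (x - p j) * backlund α u u' x) (𝓝[≠] p j) (𝓝 (-1)) := by
    intro j h1 h2 hodd
    have hup : Tendsto (fun x => (x - p j) * u x) (𝓝[≠] p j) (𝓝 1) := by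
      have h := hpoles j h1 h2
      rwa [Even.neg_one_pow (Odd.add_one hodd)] at h
    have hA : Tendsto (fun x => (x - p j) * (-u x)) (𝓝[≠] p j) (𝓝 (-1)) := by
      have := hup.neg
      simpa [mul_neg] using this
    have hB : Tendsto (fun x => (x - p j) * ((2*α+1)/f x)) (𝓝[≠] p j) (𝓝 0) := by
      have hsub : Tendsto (fun x => x - p j) (𝓝[≠] p j) (𝓝 0) := by
        have h : Tendsto (fun x : ℝ => x - p j) (𝓝 (p j)) (𝓝 (p j - p j)) :=
          ((continuousAt_id.sub continuousAt_const))
        simpa using h.mono_left nhdsWithin_le_nhds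
      have hdiv : Tendsto (fun x => (2*α+1)/f x) (𝓝[≠] p j) (𝓝 0) :=
        Tendsto.div_atTop tendsto_const_nhds (hfodd j h1 h2 hodd)
      simpa using hsub.mul hdiv
    have h3 := hA.add hB
    rw [add_zero] at h3
    exact h3.congr fun x => (hback (p j) x).symm
  -- limit at an even pole
  have hbul4 : ∀ j, 1 ≤ j → j ≤ m → Even j →
      Tendsto (fun x => (x - p j) * backlund α u u' x) (𝓝[≠] p j) (𝓝 0) := by
    intro j h1 h2 heven
    have hup : Tendsto (fun x => (x - p j) * u x) (𝓝[≠] p j) (𝓝 (-1)) := by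
      have h := hpoles j h1 h2
      rwa [Odd.neg_one_pow (Even.add_one heven)] at h
    have hA : Tendsto (fun x => (x - p j) * (-u x)) (𝓝[≠] p j) (𝓝 1) := by
      have := hup.neg
      simpa [mul_neg] using this
    have hB : Tendsto (fun x => (x - p j) * ((2*α+1)/f x)) (𝓝[≠] p j) (𝓝 (-1)) := by
      have hq := hfeven j h1 h2 heven
      have hne : -(2*α+1) ≠ 0 := by linarith
      have hinv := hq.inv₀ hne
      have hmul := hinv.const_mul (2*α+1)
      have hval : (2*α+1) * (-(2*α+1))⁻¹ = -1 := by
        rw [← div_eq_mul_inv, div_neg, div_self (ne_of_gt hα')]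
      rw [hval] at hmul
      refine Tendsto.congr' ?_ hmul
      filter_upwards [self_mem_nhdsWithin] with x hx
      have hxz : x - p j ≠ 0 := sub_ne_zero.mpr hx
      by_cases hfx : f x = 0
      · simp [hfx]
      · field_simp
    have h3 := hA.add hB
    rw [add_neg_cancel] at h3
    exact h3.congr fun x => (hback (p j) x).symm
  -- the enumeration q
  set q : Fin (m+1) → ℝ := fun i => if Odd (i:ℕ) then p i else ζ i with hqdef
  have qodd : ∀ i : Fin (m+1), Odd (i:ℕ) → q i = p i := fun i h => if_pos h
  have qeven : ∀ i : Fin (m+1), Even (i:ℕ) → q i = ζ i :=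
    fun i h => if_neg (Nat.not_odd_iff_even.mpr h)
  have hqmono : StrictMono q := by
    rw [Fin.strictMono_iff_lt_succ]
    intro i
    have hi : (i:ℕ) < m := i.isLt
    by_cases hodd : Odd (i:ℕ)
    · have he1 : Even ((i:ℕ)+1) := Odd.add_one hodd
      have hq1 : q i.castSucc = p i := qodd i.castSucc hodd
      have hq2 : q i.succ = ζ ((i:ℕ)+1) := qeven i.succ he1
      rw [hq1, hq2]
      have hmem := hζmem ((i:ℕ)+1) (by omega) he1
      have hlt : p ((i:ℕ)+1) < ζ ((i:ℕ)+1) := hmem.2.1 (by omega)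
      have : p (i:ℕ) < p ((i:ℕ)+1) := hp i ((i:ℕ)+1) hodd.pos (by omega) (by omega)
      linarith
    · have he : Even (i:ℕ) := Nat.not_odd_iff_even.mp hodd
      have ho1 : Odd ((i:ℕ)+1) := Even.add_one he
      have hq1 : q i.castSucc = ζ (i:ℕ) := qeven i.castSucc he
      have hq2 : q i.succ = p ((i:ℕ)+1) := qodd i.succ ho1
      rw [hq1, hq2]
      exact (hζmem (i:ℕ) (by omega) he).2.2 hi
  have hQeq : Set.range q = {x | x ∉ P ∧ f x = 0} ∪
      {x | ∃ j, 1 ≤ j ∧ j ≤ m ∧ Odd j ∧ p j = x} := by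
    ext x
    constructor
    · rintro ⟨i, rfl⟩
      have him : (i:ℕ) ≤ m := Nat.lt_succ_iff.mp i.isLt
      by_cases hodd : Odd (i:ℕ)
      · right
        exact ⟨i, hodd.pos, him, hodd, (qodd i hodd).symm⟩
      · left
        have heven : Even (i:ℕ) := Nat.not_odd_iff_even.mp hodd
        rw [qeven i heven]
        exact ⟨Javoid i him _ (hζmem i him heven), hζzero i him heven⟩
    · rintro (⟨hxP, hx0⟩ | ⟨j, hj1, hjm, hjodd, rfl⟩)
      · obtain ⟨j, hjm, hxJ⟩ := cover x hxP
        have heven : Even j := by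
          by_contra hodd
          exact nodd j hjm (Nat.not_even_iff_odd.mp hodd) x hxJ hx0
        have hxz : x = ζ j :=
          uniq j hjm x hxJ (ζ j) (hζmem j hjm heven) hx0 (hζzero j hjm heven)
        refine ⟨⟨j, Nat.lt_succ_of_le hjm⟩, ?_⟩
        rw [qeven ⟨j, Nat.lt_succ_of_le hjm⟩ heven]
        exact hxz.symm
      · exact ⟨⟨j, Nat.lt_succ_of_le hjm⟩, qodd ⟨j, Nat.lt_succ_of_le hjm⟩ hjodd⟩
  have hcard : ({x | x ∉ P ∧ f x = 0} ∪
      {x | ∃ j, 1 ≤ j ∧ j ≤ m ∧ Odd j ∧ p j = x}).ncard = m + 1 := by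
    rw [← hQeq, ← Nat.card_coe_set_eq, Nat.card_range_of_injective hqmono.injective]
    simp
  have hlim : ∀ i : Fin (m+1),
      Tendsto (fun x => (x - q i) * backlund α u u' x) (𝓝[≠] q i)
        (𝓝 ((-1:ℝ)^(i:ℕ))) := by
    intro i
    have him : (i:ℕ) ≤ m := Nat.lt_succ_iff.mp i.isLt
    by_cases hodd : Odd (i:ℕ)
    · rw [qodd i hodd, Odd.neg_one_pow hodd]
      exact hbul3 i hodd.pos him hodd
    · have heven : Even (i:ℕ) := Nat.not_odd_iff_even.mp hodd
      rw [qeven i heven, Even.neg_one_pow heven]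
      exact hbul2 (ζ i) (Javoid i him _ (hζmem i him heven)) (hζzero i him heven)
  have hq0 : q 0 < p 1 := by
    have h1 : q 0 = ζ 0 := qeven 0 (by exact Even.zero)
    rw [h1]
    exact (hζmem 0 (Nat.zero_le m) Even.zero).1 rfl
  have hlast1 : Odd m → q (Fin.last m) = p m := by
    intro hodd
    exact qodd (Fin.last m) hodd
  have hlast2 : Even m → p m < q (Fin.last m) := by
    intro heven
    rw [qeven (Fin.last m) heven]
    exact (hζmem m le_rfl heven).2.1 hm
  exact ⟨hcard, hbul2, hbul3, hbul4, q, hqmono, hQeq, hlim, hq0, hlast1, hlast2⟩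
end
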